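/- arXiv:1411.6184 — 4 statements merged into one kernel-verified Lean document; each statement's English description precedes it below -/
import Mathlib

section
/- For every n ≥ 1, the Eulerian polynomial A_n(t) = Σ_{σ∈S_n} t^{des σ} admits the expansion A_n(t) = Σ_{k=0}^{⌊(n-1)/2⌋} |DD_{n,k}| t^k (1+t)^{n-1-2k}, where DD_{n,k} is the set of permutations σ of [n] with exactly k descents and no double descent in the word σ(1)...σ(n)0. -/
open Finset

/-- The word `σ(1)…σ(n)0…` (1-based values, 0-based positions), with value 0 beyond position n. -/
def wrd {n : ℕ} (σ : Equiv.Perm (Fin n)) (i : ℕ) : ℕ :=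
  if h : i < n then ((σ ⟨i, h⟩ : Fin n) : ℕ) + 1 else 0

/-- Number of descents of `σ`. -/
def desN {n : ℕ} (σ : Equiv.Perm (Fin n)) : ℕ :=
  ((Finset.range (n - 1)).filter fun i => wrd σ (i + 1) < wrd σ i).card

/-- Number of double descents of the word `σ0`. -/
def ddN {n : ℕ} (σ : Equiv.Perm (Fin n)) : ℕ :=
  ((Finset.Ico 1 n).filter fun i => wrd σ (i + 1) < wrd σ i ∧ wrd σ i < wrd σ (i - 1)).card

/-- Permutations with `k` descents and no double descent in `σ0`. -/
def DDset (n k : ℕ) : Finset (Equiv.Perm (Fin n)) :=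
  Finset.univ.filter fun σ => desN σ = k ∧ ddN σ = 0

/-- Number of excedances. -/
def excN {n : ℕ} (σ : Equiv.Perm (Fin n)) : ℕ :=
  (Finset.univ.filter fun i : Fin n => i < σ i).card

/-- Number of weak excedances. -/
def wexN {n : ℕ} (σ : Equiv.Perm (Fin n)) : ℕ :=
  (Finset.univ.filter fun i : Fin n => i ≤ σ i).card

/-- Number of fixed points. -/
def fixN {n : ℕ} (σ : Equiv.Perm (Fin n)) : ℕ :=
  (Finset.univ.filter fun i : Fin n => σ i = i).card

/-- Number of drops. -/
def dropN {n : ℕ} (σ : Equiv.Perm (Fin n)) : ℕ :=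
  (Finset.univ.filter fun i : Fin n => σ i < i).card

/-- Number of inversions. -/
def invN {n : ℕ} (σ : Equiv.Perm (Fin n)) : ℕ :=
  ((Finset.univ : Finset (Fin n × Fin n)).filter fun p => p.1 < p.2 ∧ σ p.2 < σ p.1).card

/-- Number of cyclic double ascents (double excedances): `i < σ(i) < σ(σ(i))`. -/
def cdaN {n : ℕ} (σ : Equiv.Perm (Fin n)) : ℕ :=
  (Finset.univ.filter fun i : Fin n => i < σ i ∧ σ i < σ (σ i)).card

/-- `les σ` : pairs (i,j), 2 ≤ i < j ≤ n (1-based) with σ(i-1) > σ(j) > σ(i). -/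
def lesN {n : ℕ} (σ : Equiv.Perm (Fin n)) : ℕ :=
  (((Finset.Ico 1 n) ×ˢ (Finset.Ico 1 n)).filter fun p =>
      p.1 < p.2 ∧ wrd σ p.1 < wrd σ p.2 ∧ wrd σ p.2 < wrd σ (p.1 - 1)).card

/-- `res σ` : pairs (i,j), 1 ≤ i < j ≤ n-1 (1-based) with σ(j+1) > σ(i) > σ(j). -/
def resN {n : ℕ} (σ : Equiv.Perm (Fin n)) : ℕ :=
  (((Finset.range (n - 1)) ×ˢ (Finset.range (n - 1))).filter fun p =>
      p.1 < p.2 ∧ wrd σ p.2 < wrd σ p.1 ∧ wrd σ p.1 < wrd σ (p.2 + 1)).card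

/-- Crossings. -/
def crosN {n : ℕ} (σ : Equiv.Perm (Fin n)) : ℕ :=
  ((Finset.univ : Finset (Fin n × Fin n)).filter fun p =>
      (p.1 < p.2 ∧ p.2 ≤ σ p.1 ∧ σ p.1 < σ p.2) ∨
      (p.2 < p.1 ∧ σ p.1 < p.2 ∧ σ p.2 < σ p.1)).card

/-- Nestings. -/
def nestN {n : ℕ} (σ : Equiv.Perm (Fin n)) : ℕ :=
  ((Finset.univ : Finset (Fin n × Fin n)).filter fun p =>
      (p.1 < p.2 ∧ p.2 ≤ σ p.2 ∧ σ p.2 < σ p.1) ∨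
      (p.2 < p.1 ∧ σ p.2 < p.2 ∧ σ p.1 < σ p.2)).card

/-- Derangements of `[n]`. -/
def Der (n : ℕ) : Finset (Equiv.Perm (Fin n)) :=
  Finset.univ.filter fun σ => ∀ i, σ i ≠ i

/-- Derangements with `k` excedances and no cyclic double ascent. -/
def DEset (n k : ℕ) : Finset (Equiv.Perm (Fin n)) :=
  (Der n).filter fun σ => excN σ = k ∧ cdaN σ = 0

/-- `γ_{n,i,j}`: permutations with `i` fixed points, `j` excedances, no double excedance. -/
def gam (n i j : ℕ) : ℕ :=
  (Finset.univ.filter fun τ : Equiv.Perm (Fin n) =>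
      fixN τ = i ∧ excN τ = j ∧ cdaN τ = 0).card

/-- `γ_{n,k}^{(2)}`: permutations with `k` weak excedances and no double excedance. -/
def gam2 (n k : ℕ) : ℕ :=
  (Finset.univ.filter fun τ : Equiv.Perm (Fin n) => wexN τ = k ∧ cdaN τ = 0).card

/-- Derangements in the wreath product `Z_r ≀ S_n` (no `i` with `π i = i` and color 0). -/
def ColDer (r n : ℕ) : Finset (Equiv.Perm (Fin n) × (Fin n → Fin r)) :=
  Finset.univ.filter fun σ => ∀ i, σ.1 i = i → (σ.2 i : ℕ) ≠ 0

/-- Flag excedance. -/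
def fexc {r n : ℕ} (σ : Equiv.Perm (Fin n) × (Fin n → Fin r)) : ℕ :=
  r * excN σ.1 + ∑ i, (σ.2 i : ℕ)

/-- Excedance with respect to the friends order. -/
def cexc {r n : ℕ} (σ : Equiv.Perm (Fin n) × (Fin n → Fin r)) : ℕ :=
  excN σ.1 + (Finset.univ.filter fun i => i ≤ σ.1 i ∧ (σ.2 i : ℕ) ≠ 0).card

/-- `D_n^{(r)}(t)` as a polynomial in `ℤ[t]`. -/
noncomputable def DPoly (r n : ℕ) : Polynomial ℤ :=
  ∑ σ ∈ ColDer r n, Polynomial.X ^ fexc σ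

/-- `d_n^{(r)}(t)` as a polynomial in `ℤ[t]`. -/
noncomputable def dPolyC (r n : ℕ) : Polynomial ℤ :=
  ∑ σ ∈ ColDer r n, Polynomial.X ^ cexc σ

/-- The type-A derangement polynomial `d_n(t)`. -/
noncomputable def derPoly (n : ℕ) : Polynomial ℤ :=
  ∑ σ ∈ Der n, Polynomial.X ^ excN σ

/-- Drop-colored permutations (colors 1,2 allowed only on drops) without double excedance. -/
def DCset (n : ℕ) : Finset (Equiv.Perm (Fin n) × (Fin n → Fin 3)) :=
  Finset.univ.filter fun σ => cdaN σ.1 = 0 ∧ ∀ i, (σ.2 i : ℕ) ≠ 0 → σ.1 i < i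

/-- Number of colored drops. -/
def cdropN {n : ℕ} (σ : Equiv.Perm (Fin n) × (Fin n → Fin 3)) : ℕ :=
  (Finset.univ.filter fun i => (σ.2 i : ℕ) ≠ 0).card

/-- `ĝ_{n,k}`. -/
def ghat (n k : ℕ) : ℕ :=
  ((DCset n).filter fun σ => wexN σ.1 + cdropN σ = k).card


def desL : List ℕ → ℕ
  | a :: b :: t => (if b < a then 1 else 0) + desL (b :: t)
  | _ => 0

def ddfB : List ℕ → Bool
  | a :: b :: t => (!(t.headD 0 < b && b < a)) && ddfB (b :: t)
  | _ => true

lemma desL_nil : desL [] = 0 := rfl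
lemma desL_single (a : ℕ) : desL [a] = 0 := rfl
lemma desL_cons_cons (a b : ℕ) (t : List ℕ) :
    desL (a :: b :: t) = (if b < a then 1 else 0) + desL (b :: t) := rfl
lemma ddfB_cons_cons (a b : ℕ) (t : List ℕ) :
    ddfB (a :: b :: t) = ((!(t.headD 0 < b && b < a)) && ddfB (b :: t)) := rfl

lemma desL_split (m : ℕ) : ∀ (l1 l2 : List ℕ), (∀ x ∈ l1, m < x) → (∀ x ∈ l2, m < x) →
    desL (l1 ++ m :: l2) = desL l1 + desL l2 + (if l1 = [] then 0 else 1)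
  | [], l2, _, h2 => by
      cases l2 with
      | nil => simp [desL]
      | cons c t =>
        have : ¬ c < m := by have := h2 c (by simp); omega
        simp [desL_cons_cons, this, desL]
  | [a], l2, h1, h2 => by
      have : m < a := h1 a (by simp)
      have h' := desL_split m [] l2 (by simp) h2
      simp only [List.nil_append] at h'
      simp [desL_cons_cons, this, h', desL]
      omega
  | a :: b :: t, l2, h1, h2 => by
      have h' := desL_split m (b :: t) l2 (fun x hx => h1 x (by simp at hx ⊢; tauto)) h2
      simp only [List.cons_append] at *
      rw [desL_cons_cons, desL_cons_cons, h']
      simp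
      ring

lemma ddfB_cons_of_lt (m : ℕ) (l : List ℕ) (h : ∀ x ∈ l, m < x) :
    ddfB (m :: l) = ddfB l := by
  cases l with
  | nil => rfl
  | cons c t =>
    have : ¬ c < m := by have := h c (by simp); omega
    simp [ddfB_cons_cons, this]

lemma ddfB_split (m : ℕ) (hm : 0 < m) : ∀ (l1 l2 : List ℕ),
    (∀ x ∈ l1, m < x) → (∀ x ∈ l2, m < x) →
    (ddfB (l1 ++ m :: l2) = true ↔ (ddfB l1 = true ∧ ddfB l2 = true ∧ (l1 = [] ∨ l2 ≠ [])))
  | [], l2, _, h2 => by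
      simp [ddfB_cons_of_lt m l2 h2, ddfB]
  | [a], l2, h1, h2 => by
      have ha : m < a := h1 a (by simp)
      cases l2 with
      | nil => simp [ddfB_cons_cons, ha, hm, ddfB]
      | cons c t =>
        have hc : ¬ c < m := by have := h2 c (by simp); omega
        simp only [List.cons_append, List.nil_append, ddfB_cons_cons]
        simp [hc, ddfB]
  | a :: b :: t, l2, h1, h2 => by
      have ih := ddfB_split m hm (b :: t) l2 (fun x hx => h1 x (by simp at hx ⊢; tauto)) h2
      have hb : m < b := h1 b (by simp)
      have hhead : decide ((t ++ m :: l2).headD 0 < b) = decide (t.headD 0 < b) := by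
        cases t with
        | nil => simp; omega
        | cons c u => simp
      simp only [List.cons_append] at ih ⊢
      rw [ddfB_cons_cons, ddfB_cons_cons, hhead]
      constructor
      · rintro h
        simp only [Bool.and_eq_true] at h
        obtain ⟨hA, hB⟩ := h
        rw [ih] at hB
        refine ⟨?_, hB.2.1, Or.inr (hB.2.2.elim (by simp) id)⟩
        simp only [Bool.and_eq_true, Bool.not_eq_true']
        simp only [Bool.and_eq_true, Bool.not_eq_true'] at hA
        exact ⟨hA, hB.1⟩
      · rintro ⟨h1', h2', h3'⟩
        simp only [Bool.and_eq_true, Bool.not_eq_true'] at h1' ⊢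
        refine ⟨h1'.1, ?_⟩
        rw [ih]
        exact ⟨h1'.2, h2', Or.inr (h3'.elim (by simp) id)⟩

lemma desL_lt_length : ∀ l : List ℕ, l ≠ [] → desL l < l.length
  | [a], _ => by simp [desL]
  | a :: b :: t, _ => by
      have := desL_lt_length (b :: t) (by simp)
      rw [desL_cons_cons]
      simp only [List.length_cons] at *
      split <;> omega

lemma ddf_bound : ∀ (N : ℕ) (l : List ℕ), l.length ≤ N → (∀ x ∈ l, 0 < x) →
    ddfB l = true → l ≠ [] → 2 * desL l + 1 ≤ l.length := by
  intro N
  induction N with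
  | zero => intro l hl _ _ hne; cases l <;> simp_all
  | succ N ih =>
    intro l hl hpos hdd hne
    match l with
    | [a] => simp [desL]
    | a :: b :: t =>
      rw [ddfB_cons_cons] at hdd
      simp only [Bool.and_eq_true, Bool.not_eq_true', Bool.and_eq_false_iff,
        decide_eq_false_iff_not] at hdd
      obtain ⟨hA, hB⟩ := hdd
      by_cases hba : b < a
      · have hbpos : 0 < b := hpos b (by simp)
        have hhd : ¬ t.headD 0 < b := by
          rcases hA with h | h
          · exact h
          · exact absurd hba h
        match t with
        | [] => simp at hhd; omega
        | c :: t' =>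
          simp only [List.headD_cons] at hhd
          have hc : ¬ c < b := hhd
          have hdd' : ddfB (c :: t') = true := by
            rw [ddfB_cons_cons] at hB
            simp only [Bool.and_eq_true] at hB
            exact hB.2
          have hlen : (c :: t').length ≤ N := by
            simp only [List.length_cons] at hl ⊢; omega
          have := ih (c :: t') hlen (fun x hx => hpos x (by simp at hx ⊢; tauto)) hdd' (by simp)
          rw [desL_cons_cons, desL_cons_cons]
          simp only [hba, hc, if_true, if_false, List.length_cons] at *
          omega
      · have := ih (b :: t) (by simp only [List.length_cons] at hl ⊢; omega)
          (fun x hx => hpos x (by simp at hx ⊢; tauto)) hB (by simp)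
        rw [desL_cons_cons]
        simp only [hba, if_false, List.length_cons] at *
        omega

lemma card_filter_range (P : ℕ → Prop) [DecidablePred P] (n : ℕ) :
    ((Finset.range n).filter P).card = (List.range n).countP (fun i => decide (P i)) := by
  induction n with
  | zero => simp
  | succ n ih =>
    rw [Finset.range_add_one, List.range_succ, Finset.filter_insert]
    by_cases h : P n <;>
      simp [h, Finset.card_insert_of_notMem, ih, List.countP_append, List.countP_cons]

lemma getD_zero_headD (l : List ℕ) : l.getD 0 0 = l.headD 0 := by cases l <;> rfl

lemma desL_eq : ∀ l : List ℕ,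
    desL l = (List.range (l.length - 1)).countP (fun i => decide (l.getD (i+1) 0 < l.getD i 0))
  | [] => by simp [desL]
  | [a] => by simp [desL]
  | a :: b :: t => by
      have ih := desL_eq (b :: t)
      rw [desL_cons_cons, ih]
      have hlen : (a :: b :: t).length - 1 = t.length + 1 := by simp
      have hlen2 : (b :: t).length - 1 = t.length := by simp
      rw [hlen, hlen2, List.range_succ_eq_map, List.countP_cons, List.countP_map]
      have hc : ((fun i => decide ((a::b::t).getD (i+1) 0 < (a::b::t).getD i 0)) ∘ Nat.succ)
          = (fun i => decide ((b::t).getD (i+1) 0 < (b::t).getD i 0)) := by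
        funext i
        simp [List.getD_cons_succ]
      rw [hc]
      simp only [List.getD_cons_succ, List.getD_cons_zero, decide_eq_true_eq]
      omega

lemma ddfB_iff : ∀ l : List ℕ, (ddfB l = true ↔
    ∀ i : ℕ, ¬(l.getD (i+2) 0 < l.getD (i+1) 0 ∧ l.getD (i+1) 0 < l.getD i 0))
  | [] => by
      simp only [ddfB, true_iff]
      intro i; simp
  | [a] => by
      simp only [ddfB, true_iff]
      intro i
      rcases i with _ | j <;> simp
  | a :: b :: t => by
      have ih := ddfB_iff (b :: t)
      rw [ddfB_cons_cons]
      simp only [Bool.and_eq_true, Bool.not_eq_true', Bool.and_eq_false_iff,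
        decide_eq_false_iff_not, ih]
      constructor
      · rintro ⟨hA, hB⟩ i
        rcases i with _ | j
        · simp only [List.getD_cons_succ, List.getD_cons_zero, getD_zero_headD]
          rintro ⟨c1, c2⟩
          rcases hA with h | h
          · exact h c1
          · exact h c2
        · have := hB j
          simpa only [List.getD_cons_succ] using this
      · intro h
        refine ⟨?_, fun j => ?_⟩
        · have h0 := h 0
          simp only [List.getD_cons_succ, List.getD_cons_zero, getD_zero_headD] at h0
          by_cases hc : t.headD 0 < b
          · right; intro hba; exact h0 ⟨hc, hba⟩
          · left; exact hc
        · have := h (j+1)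
          simpa only [List.getD_cons_succ] using this

def W (A : Finset ℕ) : Finset (List ℕ) := (A.sort (·≤·)).permutations.toFinset

lemma mem_W {A : Finset ℕ} {l : List ℕ} : l ∈ W A ↔ l.Nodup ∧ l.toFinset = A := by
  rw [W, List.mem_toFinset, List.mem_permutations]
  constructor
  · intro h
    refine ⟨h.nodup_iff.mpr (A.sort_nodup _), ?_⟩
    rw [List.toFinset_eq_of_perm _ _ h, Finset.sort_toFinset]
  · rintro ⟨h1, h2⟩
    exact List.perm_of_nodup_nodup_toFinset_eq h1 (A.sort_nodup _)
      (by rw [h2, Finset.sort_toFinset])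

lemma takeWhile_append_split (m : ℕ) (l1 l2 : List ℕ) (h : ∀ x ∈ l1, x ≠ m) :
    (l1 ++ m :: l2).takeWhile (fun x => x ≠ m) = l1 ∧
    (l1 ++ m :: l2).dropWhile (fun x => x ≠ m) = m :: l2 := by
  induction l1 with
  | nil => simp [List.takeWhile, List.dropWhile]
  | cons a t ih =>
    have ha : a ≠ m := h a (by simp)
    have iht := ih (fun x hx => h x (by simp [hx]))
    simp only [List.cons_append, List.takeWhile_cons, List.dropWhile_cons]
    simp [ha] at iht ⊢
    exact ⟨iht.1, iht.2⟩

lemma exists_split (m : ℕ) : ∀ (w : List ℕ), m ∈ w →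
    w = w.takeWhile (fun x => x ≠ m) ++ m :: (w.dropWhile (fun x => x ≠ m)).tail := by
  intro w hm
  have hd : w.dropWhile (fun x => x ≠ m) = m :: (w.dropWhile (fun x => x ≠ m)).tail := by
    induction w with
    | nil => simp at hm
    | cons a t ih =>
      by_cases ha : a = m
      · subst ha
        simp [List.dropWhile_cons]
      · have hmt : m ∈ t := by rcases List.mem_cons.mp hm with h | h; exact absurd h.symm ha; exact h
        rw [List.dropWhile_cons, if_pos (by simp [ha])]
        exact ih hmt
  have h2 := List.takeWhile_append_dropWhile (p := fun x => decide (x ≠ m)) (l := w)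
  rw [hd] at h2
  exact h2.symm

lemma min'_lt_of_mem {A : Finset ℕ} (hA : A.Nonempty) {x : ℕ}
    (hx : x ∈ A.erase (A.min' hA)) : A.min' hA < x := by
  rcases Finset.mem_erase.mp hx with ⟨hne, hxA⟩
  exact lt_of_le_of_ne (A.min'_le x hxA) (Ne.symm hne)

lemma sum_W_split {M : Type*} [AddCommMonoid M] (A : Finset ℕ) (hA : A.Nonempty)
    (f : List ℕ → M) :
    ∑ w ∈ W A, f w =
      ∑ B ∈ (A.erase (A.min' hA)).powerset,
        ∑ p ∈ W B ×ˢ W ((A.erase (A.min' hA)) \ B), f (p.1 ++ (A.min' hA) :: p.2) := by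
  classical
  set m := A.min' hA with hm
  have hmA : m ∈ A := A.min'_mem hA
  rw [← Finset.sum_sigma ((A.erase m).powerset)
      (fun B => W B ×ˢ W ((A.erase m) \ B))
      (fun x => f (x.2.1 ++ m :: x.2.2))]
  apply Finset.sum_bij'
    (i := fun w _ => (⟨(w.takeWhile (fun x => x ≠ m)).toFinset,
        (w.takeWhile (fun x => x ≠ m), (w.dropWhile (fun x => x ≠ m)).tail)⟩ :
        Σ _ : Finset ℕ, List ℕ × List ℕ))
    (j := fun x _ => x.2.1 ++ m :: x.2.2)
  · -- hi : maps into sigma set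
    intro w hw
    rw [mem_W] at hw
    obtain ⟨hnd, hft⟩ := hw
    have hmw : m ∈ w := by rw [← List.mem_toFinset, hft]; exact hmA
    set l1 := w.takeWhile (fun x => x ≠ m) with hl1
    set l2 := (w.dropWhile (fun x => x ≠ m)).tail with hl2
    have hsplit : w = l1 ++ m :: l2 := exists_split m w hmw
    rw [hsplit] at hnd hft
    have hnd1 : l1.Nodup := (List.nodup_append'.mp hnd).1
    have hnd2' : (m :: l2).Nodup := (List.nodup_append'.mp hnd).2.1
    have hnd2 : l2.Nodup := (List.nodup_cons.mp hnd2').2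
    have hml2 : m ∉ l2 := (List.nodup_cons.mp hnd2').1
    have hml1 : m ∉ l1 := by
      intro hc
      have := (List.nodup_append'.mp hnd).2.2
      exact this hc (by simp)
    have hdisj : ∀ x ∈ l1, x ∉ l2 := by
      intro x hx hx2
      exact (List.nodup_append'.mp hnd).2.2 hx (by simp [hx2])
    have hmem : ∀ x, (x ∈ l1 ∨ x = m ∨ x ∈ l2) ↔ x ∈ A := by
      intro x
      rw [← hft]
      simp only [List.toFinset_append, List.toFinset_cons, Finset.mem_union, Finset.mem_insert,
        List.mem_toFinset]
      try tauto
    rw [Finset.mem_sigma]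
    constructor
    · rw [Finset.mem_powerset]
      intro x hx
      rw [List.mem_toFinset] at hx
      rw [Finset.mem_erase]
      refine ⟨?_, (hmem x).mp (Or.inl hx)⟩
      intro hc; subst hc; exact hml1 hx
    · rw [Finset.mem_product]
      constructor
      · rw [mem_W]; exact ⟨hnd1, rfl⟩
      · rw [mem_W]
        refine ⟨hnd2, ?_⟩
        ext x
        simp only [List.mem_toFinset, Finset.mem_sdiff, Finset.mem_erase]
        constructor
        · intro hx
          refine ⟨⟨?_, (hmem x).mp (Or.inr (Or.inr hx))⟩, ?_⟩
          · intro hc; subst hc; exact hml2 hx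
          · intro hc; exact hdisj x hc hx
        · rintro ⟨⟨hne, hxA⟩, hnB⟩
          rcases (hmem x).mpr hxA with h | h | h
          · exact absurd h hnB
          · exact absurd h hne
          · exact h
  · -- hj : maps into W A
    rintro ⟨B, l1, l2⟩ hx
    rw [Finset.mem_sigma, Finset.mem_powerset, Finset.mem_product] at hx
    obtain ⟨hB, h1, h2⟩ := hx
    rw [mem_W] at h1 h2 ⊢
    have hB1 : l1.toFinset = B := h1.2
    have hB2 : l2.toFinset = (A.erase m) \ B := h2.2
    have hml1 : m ∉ l1 := by
      intro hc
      have : m ∈ B := hB1 ▸ List.mem_toFinset.mpr hc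
      exact (Finset.mem_erase.mp (hB this)).1 rfl
    have hml2 : m ∉ l2 := by
      intro hc
      have : m ∈ (A.erase m) \ B := hB2 ▸ List.mem_toFinset.mpr hc
      exact (Finset.mem_erase.mp (Finset.mem_sdiff.mp this).1).1 rfl
    constructor
    · rw [List.nodup_append']
      refine ⟨h1.1, List.nodup_cons.mpr ⟨hml2, h2.1⟩, ?_⟩
      intro x hx1 hx2
      rcases List.mem_cons.mp hx2 with h | h
      · subst h; exact hml1 hx1
      · have hx1' : x ∈ B := hB1 ▸ List.mem_toFinset.mpr hx1
        have hx2' : x ∈ (A.erase m) \ B := hB2 ▸ List.mem_toFinset.mpr h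
        exact (Finset.mem_sdiff.mp hx2').2 hx1'
    · ext x
      simp only [List.toFinset_append, List.toFinset_cons, Finset.mem_union, Finset.mem_insert,
        hB1, hB2, Finset.mem_sdiff, Finset.mem_erase]
      constructor
      · rintro (h | h | h)
        · exact (Finset.mem_erase.mp (hB h)).2
        · subst h; exact hmA
        · exact h.1.2
      · intro hxA
        by_cases hxm : x = m
        · exact Or.inr (Or.inl hxm)
        · by_cases hxB : x ∈ B
          · exact Or.inl hxB
          · exact Or.inr (Or.inr ⟨⟨hxm, hxA⟩, hxB⟩)
  · -- left inverse
    intro w hw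
    rw [mem_W] at hw
    have hmw : m ∈ w := by rw [← List.mem_toFinset, hw.2]; exact hmA
    exact (exists_split m w hmw).symm
  · -- right inverse
    rintro ⟨B, l1, l2⟩ hx
    rw [Finset.mem_sigma, Finset.mem_powerset, Finset.mem_product] at hx
    obtain ⟨hB, h1, h2⟩ := hx
    rw [mem_W] at h1 h2
    have h12 : l1.toFinset = B := h1.2
    have hml1 : ∀ x ∈ l1, x ≠ m := by
      intro x hx1 hc
      have hxB : x ∈ B := h12 ▸ List.mem_toFinset.mpr hx1
      exact (Finset.mem_erase.mp (hB hxB)).1 hc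
    have hsp := takeWhile_append_split m l1 l2 hml1
    subst h12
    simp only [hsp.1, hsp.2, List.tail_cons]
  · -- value
    intro w hw
    rw [mem_W] at hw
    have hmw : m ∈ w := by rw [← List.mem_toFinset, hw.2]; exact hmA
    exact congrArg f (exists_split m w hmw)

lemma W_empty : W ∅ = {[]} := by
  ext l
  rw [mem_W]
  simp only [Finset.mem_singleton, List.toFinset_eq_empty_iff]
  constructor
  · exact fun h => h.2
  · rintro rfl; exact ⟨List.nodup_nil, rfl⟩

lemma W_singleton (a : ℕ) : W {a} = {[a]} := by
  ext l
  rw [mem_W]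
  simp only [Finset.mem_singleton]
  constructor
  · rintro ⟨hnd, hft⟩
    cases l with
    | nil => simp at hft
    | cons x s =>
      have hx : x = a := by
        have : x ∈ ({a} : Finset ℕ) := hft ▸ (by simp)
        simpa using this
      subst hx
      have hs : s = [] := by
        rcases s with _ | ⟨y, s'⟩
        · rfl
        · have hy : y ∈ ({x} : Finset ℕ) := hft ▸ (by simp)
          simp only [Finset.mem_singleton] at hy
          subst hy
          exact absurd (by simp) (List.nodup_cons.mp hnd).1
      rw [hs]
  · rintro rfl
    exact ⟨by simp, by simp⟩

lemma pos_of_mem_W {A : Finset ℕ} (h0 : 0 ∉ A) {l : List ℕ} (hl : l ∈ W A) :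
    ∀ x ∈ l, 0 < x := by
  intro x hx
  have : x ∈ A := (mem_W.mp hl).2 ▸ List.mem_toFinset.mpr hx
  exact Nat.pos_of_ne_zero (fun hc => h0 (hc ▸ this))

lemma nil_mem_W_iff {A : Finset ℕ} {l : List ℕ} (hl : l ∈ W A) : l = [] ↔ A = ∅ := by
  rw [← (mem_W.mp hl).2]
  simp [List.toFinset_eq_empty_iff]

noncomputable def Fs (t : ℤ) (A : Finset ℕ) : ℤ := ∑ w ∈ W A, t ^ desL w
noncomputable def Gs (t : ℤ) (A : Finset ℕ) : ℤ :=
  ∑ w ∈ W A, if ddfB w then t ^ desL w * (1+t) ^ (A.card - 1 - 2 * desL w) else 0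

lemma Fs_empty (t : ℤ) : Fs t ∅ = 1 := by simp [Fs, W_empty, desL]
lemma Gs_empty (t : ℤ) : Gs t ∅ = 1 := by simp [Gs, W_empty, ddfB, desL]
lemma Fs_singleton (t : ℤ) (a : ℕ) : Fs t {a} = 1 := by simp [Fs, W_singleton, desL]
lemma Gs_singleton (t : ℤ) (a : ℕ) : Gs t {a} = 1 := by simp [Gs, W_singleton, ddfB, desL]

lemma elems_gt {A : Finset ℕ} (hA : A.Nonempty) {B : Finset ℕ}
    (hB : B ⊆ A.erase (A.min' hA)) {l : List ℕ} (hl : l ∈ W B) :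
    ∀ x ∈ l, A.min' hA < x := by
  intro x hx
  exact min'_lt_of_mem hA (hB ((mem_W.mp hl).2 ▸ List.mem_toFinset.mpr hx))

lemma Fs_rec (t : ℤ) (A : Finset ℕ) (hA : A.Nonempty) :
    Fs t A = ∑ B ∈ (A.erase (A.min' hA)).powerset,
      (if B = ∅ then 1 else t) * Fs t B * Fs t ((A.erase (A.min' hA)) \ B) := by
  set m := A.min' hA with hm
  rw [Fs, sum_W_split A hA]
  apply Finset.sum_congr rfl
  intro B hB
  rw [Finset.mem_powerset] at hB
  have hCsub : (A.erase m) \ B ⊆ A.erase m := Finset.sdiff_subset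
  rw [Finset.sum_product]
  have step : ∀ l1 ∈ W B, ∀ l2 ∈ W ((A.erase m) \ B),
      t ^ desL (l1 ++ m :: l2) = ((if B = ∅ then 1 else t) * t ^ desL l1) * t ^ desL l2 := by
    intro l1 h1 l2 h2
    rw [desL_split m l1 l2 (elems_gt hA hB h1) (elems_gt hA hCsub h2)]
    have hiff : (l1 = []) ↔ (B = ∅) := nil_mem_W_iff h1
    by_cases hBe : B = ∅
    · rw [if_pos (hiff.mpr hBe), if_pos hBe]
      rw [pow_add, pow_add]
      ring
    · rw [if_neg (fun hc => hBe (hiff.mp hc)), if_neg hBe]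
      rw [pow_add, pow_add]
      ring
  rw [Finset.sum_congr rfl (fun l1 h1 => Finset.sum_congr rfl (fun l2 h2 => step l1 h1 l2 h2))]
  rw [← Finset.sum_mul_sum (W B) (W ((A.erase m) \ B))
    (fun l1 => (if B = ∅ then 1 else t) * t ^ desL l1) (fun l2 => t ^ desL l2)]
  rw [← Finset.mul_sum]
  rw [Fs, Fs, mul_assoc]

lemma length_of_mem_W {A : Finset ℕ} {l : List ℕ} (h : l ∈ W A) : l.length = A.card := by
  rw [W, List.mem_toFinset, List.mem_permutations] at h
  rw [h.length_eq, Finset.length_sort]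

lemma ddf_bound' {A : Finset ℕ} (h0 : 0 ∉ A) {l : List ℕ} (hl : l ∈ W A) (hne : l ≠ [])
    (hdd : ddfB l = true) : 2 * desL l + 1 ≤ A.card := by
  have := ddf_bound l.length l le_rfl (pos_of_mem_W h0 hl) hdd hne
  rwa [length_of_mem_W hl] at this

lemma Gs_rec (t : ℤ) (A : Finset ℕ) (hA : A.Nonempty) (h0 : 0 ∉ A) (h2 : 2 ≤ A.card) :
    Gs t A = ∑ B ∈ (A.erase (A.min' hA)).powerset,
      (if B = ∅ then (1+t) * Gs t ((A.erase (A.min' hA)) \ B)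
       else if (A.erase (A.min' hA)) \ B = ∅ then 0
       else t * Gs t B * Gs t ((A.erase (A.min' hA)) \ B)) := by
  have hmA : (A.min' hA) ∈ A := A.min'_mem hA
  rw [Gs, sum_W_split A hA]
  obtain ⟨m, hm⟩ : ∃ x, A.min' hA = x := ⟨_, rfl⟩
  rw [hm] at hmA ⊢
  have hgt : ∀ {B : Finset ℕ}, B ⊆ A.erase m → ∀ {l}, l ∈ W B → ∀ x ∈ l, m < x := by
    intro B hBs l hl x hx
    have hBs' : B ⊆ A.erase (A.min' hA) := by rw [hm]; exact hBs
    have := elems_gt hA hBs' hl x hx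
    rwa [hm] at this
  have hmpos : 0 < m := Nat.pos_of_ne_zero (fun hc => h0 (hc ▸ hmA))
  have hcard' : (A.erase m).card = A.card - 1 := Finset.card_erase_of_mem hmA
  have h0' : 0 ∉ A.erase m := fun hc => h0 (Finset.mem_of_mem_erase hc)
  apply Finset.sum_congr rfl
  intro B hB
  rw [Finset.mem_powerset] at hB
  have hCsub : (A.erase m) \ B ⊆ A.erase m := Finset.sdiff_subset
  have h0B : 0 ∉ B := fun hc => h0' (hB hc)
  have h0C : 0 ∉ (A.erase m) \ B := fun hc => h0' (hCsub hc)
  have hcardsum : B.card + ((A.erase m) \ B).card = A.card - 1 := by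
    rw [Finset.card_sdiff_of_subset hB, Nat.add_sub_cancel' (Finset.card_le_card hB), hcard']
  rw [Finset.sum_product]
  by_cases hBe : B = ∅
  · subst hBe
    rw [if_pos rfl, W_empty, Finset.sum_singleton]
    have hC : (A.erase m) \ ∅ = A.erase m := Finset.sdiff_empty
    rw [hC] at *
    have hA'ne : (A.erase m) ≠ ∅ := by
      intro hc
      rw [hc] at hcard'
      simp at hcard'
      omega
    have step : ∀ l2 ∈ W (A.erase m),
        (if ddfB (([] : List ℕ) ++ m :: l2) = true then
          t ^ desL (([] : List ℕ) ++ m :: l2) * (1+t) ^ (A.card - 1 - 2 * desL (([] : List ℕ) ++ m :: l2)) else 0)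
        = (1+t) * (if ddfB l2 = true then t ^ desL l2 * (1+t) ^ ((A.erase m).card - 1 - 2 * desL l2) else 0) := by
      intro l2 hl2
      have e2 : ∀ x ∈ l2, m < x := hgt (le_refl _) hl2
      have hddeq : ddfB ([] ++ m :: l2) = ddfB l2 := by
        rw [List.nil_append]; exact ddfB_cons_of_lt m l2 e2
      have hdeseq : desL ([] ++ m :: l2) = desL l2 := by
        rw [desL_split m [] l2 (by simp) e2, desL_nil]; simp
      rw [hddeq, hdeseq]
      by_cases hdd : ddfB l2 = true
      · rw [if_pos hdd, if_pos hdd]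
        have hne2 : l2 ≠ [] := fun hc => hA'ne ((nil_mem_W_iff hl2).mp hc)
        have hbound := ddf_bound' h0' hl2 hne2 hdd
        have hexp : A.card - 1 - 2 * desL l2 = ((A.erase m).card - 1 - 2 * desL l2) + 1 := by omega
        rw [hexp, pow_succ]
        ring
      · rw [if_neg hdd, if_neg hdd, mul_zero]
    rw [Finset.sum_congr rfl step, ← Finset.mul_sum, Gs]
  · rw [if_neg hBe]
    have hBne : B.Nonempty := Finset.nonempty_iff_ne_empty.mpr hBe
    by_cases hCe : (A.erase m) \ B = ∅
    · rw [if_pos hCe, hCe, W_empty]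
      have step : ∀ l1 ∈ W B,
          ∑ l2 ∈ ({[]} : Finset (List ℕ)),
            (if ddfB (l1 ++ m :: l2) = true then
              t ^ desL (l1 ++ m :: l2) * (1+t) ^ (A.card - 1 - 2 * desL (l1 ++ m :: l2)) else 0) = 0 := by
        intro l1 hl1
        rw [Finset.sum_singleton]
        have e1 : ∀ x ∈ l1, m < x := hgt hB hl1
        have hne1 : l1 ≠ [] := fun hc => hBe ((nil_mem_W_iff hl1).mp hc)
        have hiff := ddfB_split m hmpos l1 [] e1 (by simp)
        rw [if_neg]
        intro hc
        rcases (hiff.mp hc).2.2 with h | h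
        · exact hne1 h
        · exact h rfl
      rw [Finset.sum_congr rfl step, Finset.sum_const, smul_zero]
    · rw [if_neg hCe]
      have hCne : ((A.erase m) \ B).Nonempty := Finset.nonempty_iff_ne_empty.mpr hCe
      have step : ∀ l1 ∈ W B, ∀ l2 ∈ W ((A.erase m) \ B),
          (if ddfB (l1 ++ m :: l2) = true then
            t ^ desL (l1 ++ m :: l2) * (1+t) ^ (A.card - 1 - 2 * desL (l1 ++ m :: l2)) else 0)
          = (t * (if ddfB l1 = true then t ^ desL l1 * (1+t) ^ (B.card - 1 - 2 * desL l1) else 0))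
            * (if ddfB l2 = true then t ^ desL l2 * (1+t) ^ (((A.erase m) \ B).card - 1 - 2 * desL l2) else 0) := by
        intro l1 hl1 l2 hl2
        have e1 : ∀ x ∈ l1, m < x := hgt hB hl1
        have e2 : ∀ x ∈ l2, m < x := hgt hCsub hl2
        have hne1 : l1 ≠ [] := fun hc => hBe ((nil_mem_W_iff hl1).mp hc)
        have hne2 : l2 ≠ [] := fun hc => hCe ((nil_mem_W_iff hl2).mp hc)
        have hiff := ddfB_split m hmpos l1 l2 e1 e2
        have hdes : desL (l1 ++ m :: l2) = desL l1 + desL l2 + 1 := by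
          rw [desL_split m l1 l2 e1 e2, if_neg hne1]
        by_cases hd1 : ddfB l1 = true
        · by_cases hd2 : ddfB l2 = true
          · rw [if_pos (hiff.mpr ⟨hd1, hd2, Or.inr hne2⟩), if_pos hd1, if_pos hd2, hdes]
            have hb1 := ddf_bound' h0B hl1 hne1 hd1
            have hb2 := ddf_bound' h0C hl2 hne2 hd2
            have hexp : A.card - 1 - 2 * (desL l1 + desL l2 + 1)
                = (B.card - 1 - 2 * desL l1) + (((A.erase m) \ B).card - 1 - 2 * desL l2) := by
              omega
            rw [hexp, pow_add, pow_add]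
            ring
          · rw [if_neg, if_neg hd2, mul_zero]
            intro hc; exact hd2 (hiff.mp hc).2.1
        · rw [if_neg, if_neg hd1]
          · ring
          · intro hc; exact hd1 (hiff.mp hc).1
      rw [Finset.sum_congr rfl (fun l1 h1 => Finset.sum_congr rfl (fun l2 h2 => step l1 h1 l2 h2))]
      rw [← Finset.sum_mul_sum (W B) (W ((A.erase m) \ B))
        (fun l1 => t * (if ddfB l1 = true then t ^ desL l1 * (1+t) ^ (B.card - 1 - 2 * desL l1) else 0))
        (fun l2 => (if ddfB l2 = true then t ^ desL l2 * (1+t) ^ (((A.erase m) \ B).card - 1 - 2 * desL l2) else 0))]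
      rw [← Finset.mul_sum, Gs, Gs, mul_assoc]

lemma core (t : ℤ) : ∀ (n : ℕ) (A : Finset ℕ), A.card = n → 0 ∉ A → Fs t A = Gs t A := by
  intro n
  induction n using Nat.strong_induction_on with
  | _ n ih =>
  intro A hcard h0
  rcases Nat.lt_or_ge n 2 with hn2 | hn2
  · -- small cases
    interval_cases n
    · rw [Finset.card_eq_zero.mp hcard, Fs_empty, Gs_empty]
    · obtain ⟨a, rfl⟩ := Finset.card_eq_one.mp hcard
      rw [Fs_singleton, Gs_singleton]
  · have hA : A.Nonempty := Finset.card_pos.mp (by omega)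
    rw [Fs_rec t A hA, Gs_rec t A hA h0 (by omega)]
    obtain ⟨D, hD⟩ : ∃ x, A.erase (A.min' hA) = x := ⟨_, rfl⟩
    have hDcard : D.card = A.card - 1 := by
      rw [← hD]; exact Finset.card_erase_of_mem (A.min'_mem hA)
    have h0D : 0 ∉ D := fun hc => h0 (Finset.mem_of_mem_erase (hD ▸ hc))
    have hDne : D ≠ ∅ := by
      intro hc
      rw [hc, Finset.card_empty] at hDcard
      omega
    rw [hD]
    set f : Finset ℕ → ℤ := fun B => (if B = ∅ then 1 else t) * Fs t B * Fs t (D \ B) with hf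
    set g : Finset ℕ → ℤ := fun B =>
      (if B = ∅ then (1+t) * Gs t (D \ B)
       else if D \ B = ∅ then 0 else t * Gs t B * Gs t (D \ B)) with hg
    show ∑ B ∈ D.powerset, f B = ∑ B ∈ D.powerset, g B
    have hIH : ∀ B ⊆ D, Fs t B = Gs t B := by
      intro B hBsub
      have : B.card < n := by
        have := Finset.card_le_card hBsub
        omega
      exact ih B.card this B rfl (fun hc => h0D (hBsub hc))
    have hmid : ∀ B ∈ D.powerset, B ∉ ({∅, D} : Finset (Finset ℕ)) → f B - g B = 0 := by
      intro B hB hBn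
      rw [Finset.mem_powerset] at hB
      simp only [Finset.mem_insert, Finset.mem_singleton] at hBn
      push_neg at hBn
      obtain ⟨hBne, hBnD⟩ := hBn
      have hCne : D \ B ≠ ∅ := by
        intro hc
        exact hBnD (Finset.Subset.antisymm hB (Finset.sdiff_eq_empty_iff_subset.mp hc))
      rw [hf, hg]
      simp only [if_neg hBne.ne_empty, if_neg hCne]
      rw [hIH B hB, hIH (D \ B) Finset.sdiff_subset]
      ring
    have hpairsub : ({∅, D} : Finset (Finset ℕ)) ⊆ D.powerset := by
      intro x hx
      simp only [Finset.mem_insert, Finset.mem_singleton] at hx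
      rcases hx with rfl | rfl
      · exact Finset.mem_powerset.mpr (Finset.empty_subset _)
      · exact Finset.mem_powerset.mpr subset_rfl
    have hsum0 : ∑ B ∈ D.powerset, (f B - g B) = 0 := by
      rw [← Finset.sum_subset hpairsub (fun x hx hx2 => hmid x hx hx2)]
      rw [Finset.sum_pair (Ne.symm hDne)]
      have hfD : f D = t * Fs t D := by
        rw [hf]
        simp only [if_neg hDne, Finset.sdiff_self, Fs_empty, mul_one]
      have hfe : f ∅ = Fs t D := by
        rw [hf]; simp [Fs_empty]
      have hgD : g D = 0 := by
        rw [hg]; simp [hDne]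
      have hge : g ∅ = (1+t) * Gs t D := by
        rw [hg]; simp
      rw [hfD, hfe, hgD, hge, hIH D (le_refl D)]
      ring
    have := Finset.sum_sub_distrib (s := D.powerset) (f := f) (g := g)
    rw [hsum0] at this
    linarith [this]

def wlist {n : ℕ} (σ : Equiv.Perm (Fin n)) : List ℕ :=
  List.ofFn (fun i : Fin n => ((σ i : Fin n) : ℕ) + 1)

lemma wlist_length {n : ℕ} (σ : Equiv.Perm (Fin n)) : (wlist σ).length = n := by
  simp [wlist]

lemma wrd_eq {n : ℕ} (σ : Equiv.Perm (Fin n)) (i : ℕ) :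
    wrd σ i = (wlist σ).getD i 0 := by
  by_cases h : i < n
  · rw [wrd, dif_pos h, List.getD_eq_getElem _ _ (by rw [wlist_length]; exact h)]
    unfold wlist
    rw [List.getElem_ofFn]
  · rw [wrd, dif_neg h, List.getD_eq_default]
    rw [wlist_length]
    omega

lemma wlist_mem_W {n : ℕ} (σ : Equiv.Perm (Fin n)) : wlist σ ∈ W (Finset.Icc 1 n) := by
  rw [mem_W, wlist]
  constructor
  · rw [List.nodup_ofFn]
    intro i j hij
    simp only [add_left_inj] at hij
    exact σ.injective (Fin.ext hij)
  · ext x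
    simp only [List.mem_toFinset, List.mem_ofFn, Set.mem_range, Finset.mem_Icc]
    constructor
    · rintro ⟨i, rfl⟩
      have := (σ i).isLt
      omega
    · rintro ⟨h1, h2⟩
      refine ⟨σ.symm ⟨x - 1, by omega⟩, ?_⟩
      rw [Equiv.apply_symm_apply]
      simp
      omega

lemma sum_transfer {M : Type*} [AddCommMonoid M] (n : ℕ) (f : List ℕ → M) :
    ∑ σ : Equiv.Perm (Fin n), f (wlist σ) = ∑ w ∈ W (Finset.Icc 1 n), f w := by
  apply Finset.sum_bij (fun σ _ => wlist σ)
  · intro σ _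
    exact wlist_mem_W σ
  · intro σ1 _ σ2 _ h
    rw [wlist, wlist] at h
    have := List.ofFn_injective h
    ext i
    have h2 := congrFun this i
    simp only [add_left_inj] at h2
    exact h2
  · intro w hw
    obtain ⟨hnd, hft⟩ := mem_W.mp hw
    have hlen : w.length = n := by
      rw [length_of_mem_W hw, Nat.card_Icc]
      omega
    have hvals : ∀ x ∈ w, 1 ≤ x ∧ x ≤ n := by
      intro x hx
      have : x ∈ Finset.Icc 1 n := hft ▸ List.mem_toFinset.mpr hx
      simpa using this
    have hget : ∀ i : Fin n, 1 ≤ w.get (Fin.cast hlen.symm i) ∧ w.get (Fin.cast hlen.symm i) ≤ n :=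
      fun i => hvals _ (List.get_mem w _)
    set g : Fin n → Fin n := fun i => ⟨w.get (Fin.cast hlen.symm i) - 1, by
      have := hget i; omega⟩ with hg
    have hginj : Function.Injective g := by
      intro i j hij
      rw [hg] at hij
      simp only [Fin.mk.injEq] at hij
      have hi := hget i
      have hj := hget j
      have : w.get (Fin.cast hlen.symm i) = w.get (Fin.cast hlen.symm j) := by omega
      have := List.nodup_iff_injective_get.mp hnd this
      have := congrArg Fin.val this
      simp only [Fin.coe_cast] at this
      exact Fin.ext this
    refine ⟨Equiv.ofBijective g (Finite.injective_iff_bijective.mp hginj), Finset.mem_univ _, ?_⟩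
    rw [wlist]
    apply List.ext_get (by simp [hlen])
    intro i h1 h2
    rw [List.get_ofFn]
    simp only [Equiv.ofBijective_apply, hg]
    have := hget ⟨i, by simpa using h1⟩
    simp only [Fin.cast_mk] at this ⊢
    omega
  · intro σ _
    rfl

lemma desN_eq {n : ℕ} (σ : Equiv.Perm (Fin n)) : desN σ = desL (wlist σ) := by
  rw [desN, card_filter_range, desL_eq, wlist_length]
  have : (fun i => decide (wrd σ (i+1) < wrd σ i))
      = (fun i => decide ((wlist σ).getD (i+1) 0 < (wlist σ).getD i 0)) := by
    funext i
    rw [wrd_eq, wrd_eq]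
  rw [this]

lemma ddN_eq_zero {n : ℕ} (σ : Equiv.Perm (Fin n)) :
    ddN σ = 0 ↔ ddfB (wlist σ) = true := by
  rw [ddN, Finset.card_eq_zero, Finset.filter_eq_empty_iff, ddfB_iff]
  constructor
  · intro h j
    rw [← wrd_eq, ← wrd_eq, ← wrd_eq]
    by_cases hj : j + 1 < n
    · have := h (Finset.mem_Ico.mpr ⟨by omega, hj⟩)
      intro hc
      apply this
      have e1 : j + 1 + 1 = j + 2 := by omega
      have e2 : j + 1 - 1 = j := by omega
      rw [e1, e2]
      exact hc
    · have hz : wrd σ (j+2) = 0 := by rw [wrd]; rw [dif_neg (by omega)]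
      have hz1 : wrd σ (j+1) = 0 := by rw [wrd]; rw [dif_neg (by omega)]
      rw [hz, hz1]
      rintro ⟨c1, _⟩
      omega
  · intro h i hi
    rw [Finset.mem_Ico] at hi
    have := h (i - 1)
    rw [← wrd_eq, ← wrd_eq, ← wrd_eq] at this
    have e1 : i - 1 + 2 = i + 1 := by omega
    have e2 : i - 1 + 1 = i := by omega
    rw [e1, e2] at this
    exact this

lemma gamma_zero_of_big {n k : ℕ} (hn : 1 ≤ n) (hk : (n-1)/2 + 1 ≤ k) :
    ((W (Finset.Icc 1 n)).filter (fun w => desL w = k ∧ ddfB w = true)) = ∅ := by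
  rw [Finset.filter_eq_empty_iff]
  intro w hw
  rintro ⟨hdes, hdd⟩
  have h0 : (0:ℕ) ∉ Finset.Icc 1 n := by simp
  have hcard : (Finset.Icc 1 n).card = n := by rw [Nat.card_Icc]; omega
  have hne : w ≠ [] := by
    intro hc
    have := (nil_mem_W_iff hw).mp hc
    rw [Finset.eq_empty_iff_forall_notMem] at this
    exact this 1 (by simp; omega)
  have := ddf_bound' h0 hw hne hdd
  rw [hcard, hdes] at this
  omega

lemma Gs_regroup (t : ℤ) (n : ℕ) (hn : 1 ≤ n) :
    Gs t (Finset.Icc 1 n) = ∑ k ∈ Finset.range n,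
      (((W (Finset.Icc 1 n)).filter (fun w => desL w = k ∧ ddfB w = true)).card : ℤ)
        * t ^ k * (1 + t) ^ (n - 1 - 2 * k) := by
  have hcard : (Finset.Icc 1 n).card = n := by rw [Nat.card_Icc]; omega
  have hmap : ∀ w ∈ W (Finset.Icc 1 n), desL w ∈ Finset.range n := by
    intro w hw
    rw [Finset.mem_range]
    have hne : w ≠ [] := by
      intro hc
      have := (nil_mem_W_iff hw).mp hc
      rw [Finset.eq_empty_iff_forall_notMem] at this
      exact this 1 (by simp; omega)
    have := desL_lt_length w hne
    rwa [length_of_mem_W hw, hcard] at this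
  rw [Gs, ← Finset.sum_fiberwise_of_maps_to hmap
    (fun w => if ddfB w = true then t ^ desL w * (1+t) ^ ((Finset.Icc 1 n).card - 1 - 2 * desL w) else 0)]
  apply Finset.sum_congr rfl
  intro k _
  have step : ∀ w ∈ (W (Finset.Icc 1 n)).filter (fun w => desL w = k),
      (if ddfB w = true then t ^ desL w * (1+t) ^ ((Finset.Icc 1 n).card - 1 - 2 * desL w) else 0)
      = (if ddfB w = true then t ^ k * (1+t) ^ (n - 1 - 2 * k) else 0) := by
    intro w hw
    rw [(Finset.mem_filter.mp hw).2, hcard]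
  rw [Finset.sum_congr rfl step, ← Finset.sum_filter, Finset.filter_filter, Finset.sum_const,
    nsmul_eq_mul, mul_assoc]


theorem stmt0 (n : ℕ) (hn : 1 ≤ n) (t : ℤ) :
    (∑ σ : Equiv.Perm (Fin n), t ^ desN σ) =
      ∑ k ∈ Finset.range ((n - 1) / 2 + 1),
        ((DDset n k).card : ℤ) * t ^ k * (1 + t) ^ (n - 1 - 2 * k) := by
  have h0 : (0:ℕ) ∉ Finset.Icc 1 n := by simp
  have L1 : (∑ σ : Equiv.Perm (Fin n), t ^ desN σ) = Fs t (Finset.Icc 1 n) := by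
    rw [Fs, ← sum_transfer n (fun w => t ^ desL w)]
    exact Finset.sum_congr rfl (fun σ _ => by rw [desN_eq])
  have L3 : ∀ k, ((DDset n k).card : ℤ)
      = (((W (Finset.Icc 1 n)).filter (fun w => desL w = k ∧ ddfB w = true)).card : ℤ) := by
    intro k
    rw [DDset]
    rw [← Finset.sum_boole, ← Finset.sum_boole]
    rw [← sum_transfer n (fun w => if desL w = k ∧ ddfB w = true then (1:ℤ) else 0)]
    apply Finset.sum_congr rfl
    intro σ _
    by_cases h : desN σ = k ∧ ddN σ = 0
    · rw [if_pos h, if_pos ⟨by rw [← desN_eq]; exact h.1, (ddN_eq_zero σ).mp h.2⟩]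
    · rw [if_neg h, if_neg (fun hc => h ⟨by rw [desN_eq]; exact hc.1, (ddN_eq_zero σ).mpr hc.2⟩)]
  rw [L1, core t (Finset.Icc 1 n).card (Finset.Icc 1 n) rfl h0, Gs_regroup t n hn]
  have hsub : Finset.range ((n-1)/2 + 1) ⊆ Finset.range n := by
    intro x hx
    rw [Finset.mem_range] at *
    omega
  rw [← Finset.sum_subset hsub]
  · apply Finset.sum_congr rfl
    intro k _
    rw [L3]
  · intro k hk hk2
    rw [Finset.mem_range] at hk hk2
    rw [gamma_zero_of_big hn (by omega)]
    simp
end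

section
/- For every n ≥ 1, the derangement polynomial d_n(t) = Σ_{σ∈D_n} t^{exc σ} satisfies d_n(t) = Σ_{0 ≤ k ≤ n/2} |DE_{n,k}| t^k (1+t)^{n-2k}, hence its coefficients form a symmetric, unimodal sequence. -/
open Finset

open Finset Equiv

variable {n : ℕ}

theorem Equiv.Perm.apply_inv_self {α : Type*} (σ : Equiv.Perm α) (x : α) : σ (σ⁻¹ x) = x :=
  Equiv.apply_symm_apply σ x

theorem Equiv.Perm.inv_apply_self {α : Type*} (σ : Equiv.Perm α) (x : α) : σ⁻¹ (σ x) = x :=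
  Equiv.symm_apply_apply σ x

def cdaS (σ : Equiv.Perm (Fin n)) : Finset (Fin n) :=
  Finset.univ.filter fun u => σ⁻¹ u < u ∧ u < σ u

def cddS (σ : Equiv.Perm (Fin n)) : Finset (Fin n) :=
  Finset.univ.filter fun u => σ u < u ∧ u < σ⁻¹ u

noncomputable def Kk (σ : Equiv.Perm (Fin n)) (x : Fin n) : ℕ := sInf {m | x < (⇑σ⁻¹)^[m+1] x}

noncomputable def yy (σ : Equiv.Perm (Fin n)) (x : Fin n) : Fin n := (⇑σ⁻¹)^[Kk σ x + 1] x

noncomputable def low (σ : Equiv.Perm (Fin n)) (x : Fin n) : Equiv.Perm (Fin n) :=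
  σ * (Equiv.swap x (σ⁻¹ x) * Equiv.swap x (yy σ x))

noncomputable def rai (σ : Equiv.Perm (Fin n)) (x : Fin n) : Equiv.Perm (Fin n) :=
  (low σ⁻¹ x)⁻¹

section step
variable {σ : Equiv.Perm (Fin n)} {x : Fin n}

lemma kset_nonempty (hx2 : x < σ x) : {m | x < (⇑σ⁻¹)^[m+1] x}.Nonempty := by
  have hne : σ ≠ 1 := by
    intro h; rw [h] at hx2; simp at hx2
  have h2 : 2 ≤ orderOf σ := by
    rcases Nat.lt_or_ge (orderOf σ) 2 with h | h
    · interval_cases h' : orderOf σ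
      · exact absurd h' (orderOf_eq_zero_iff.not.mpr (by simp [isOfFinOrder_of_finite]))
      · exact absurd (orderOf_eq_one_iff.mp h') hne
    · exact h
  refine ⟨orderOf σ - 2, ?_⟩
  have hiter : (⇑σ⁻¹)^[orderOf σ - 2 + 1] x = σ x := by
    have : (σ⁻¹) ^ (orderOf σ - 1) = σ := by
      have h1 : σ ^ (orderOf σ - 1) * σ = 1 := by
        rw [← pow_succ]
        have he : orderOf σ - 1 + 1 = orderOf σ := by omega
        rw [he, pow_orderOf_eq_one]
      have h2' : σ ^ (orderOf σ - 1) = σ⁻¹ := eq_inv_of_mul_eq_one_left (by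
        exact h1)
      rw [inv_pow, h2', inv_inv]
    have he : orderOf σ - 2 + 1 = orderOf σ - 1 := by omega
    rw [he, Equiv.Perm.iterate_eq_pow, this]
  rw [Set.mem_setOf_eq, hiter]; exact hx2

lemma lt_yy (hx2 : x < σ x) : x < yy σ x := Nat.sInf_mem (kset_nonempty hx2)

lemma kk_pos (hx1 : σ⁻¹ x < x) (hx2 : x < σ x) : 1 ≤ Kk σ x := by
  by_contra h
  have h0 : Kk σ x = 0 := by omega
  have h := lt_yy (σ := σ) hx2
  rw [yy, h0] at h
  simp only [zero_add, Function.iterate_one] at h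
  exact absurd h (asymm hx1)

lemma iter_ne (hx1 : σ⁻¹ x < x) (hx2 : x < σ x) :
    ∀ d, 1 ≤ d → d ≤ Kk σ x + 1 → (⇑σ⁻¹)^[d] x ≠ x := by
  intro d hd1 hd2 heq
  rcases Nat.eq_or_lt_of_le hd1 with h1 | h1
  · rw [← h1] at heq; simp only [Function.iterate_one] at heq
    exact absurd heq (ne_of_lt hx1)
  · -- d ≥ 2
    have hstep : (⇑σ⁻¹)^[d-1] x = σ x := by
      have : σ ((⇑σ⁻¹)^[d] x) = (⇑σ⁻¹)^[d-1] x := by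
        have hd : d = (d-1) + 1 := by omega
        rw [hd, Function.iterate_succ_apply']
        simp
      rw [heq] at this; exact this.symm
    have hmem : (d - 2) ∈ {m | x < (⇑σ⁻¹)^[m+1] x} := by
      have : d - 2 + 1 = d - 1 := by omega
      rw [Set.mem_setOf_eq, this, hstep]; exact hx2
    have := Nat.sInf_le hmem
    rw [Kk] at *
    omega

lemma iter_inj (hx1 : σ⁻¹ x < x) (hx2 : x < σ x) :
    ∀ i j, i ≤ Kk σ x + 1 → j ≤ Kk σ x + 1 → (⇑σ⁻¹)^[i] x = (⇑σ⁻¹)^[j] x → i = j := by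
  have key : ∀ i j, i ≤ j → j ≤ Kk σ x + 1 → (⇑σ⁻¹)^[i] x = (⇑σ⁻¹)^[j] x → i = j := by
    intro i j hij hj heq
    by_contra hne
    have hlt : i < j := lt_of_le_of_ne hij hne
    have : (⇑σ⁻¹)^[i] ((⇑σ⁻¹)^[j-i] x) = (⇑σ⁻¹)^[i] x := by
      rw [← Function.iterate_add_apply]
      have : i + (j - i) = j := by omega
      rw [this, heq]
    have h2 : (⇑σ⁻¹)^[j-i] x = x := by
      have hinj : Function.Injective ((⇑σ⁻¹ : Fin n → Fin n)^[i]) :=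
        Function.Injective.iterate (Equiv.injective _) i
      exact hinj this
    exact iter_ne hx1 hx2 (j-i) (by omega) (by omega) h2
  intro i j hi hj heq
  rcases le_or_gt i j with h | h
  · exact key i j h hj heq
  · exact (key j i (le_of_lt h) hi heq.symm).symm

lemma block_lt (hx1 : σ⁻¹ x < x) (hx2 : x < σ x) :
    ∀ j, 1 ≤ j → j ≤ Kk σ x → (⇑σ⁻¹)^[j] x < x := by
  intro j hj1 hj2
  have hle : ¬ x < (⇑σ⁻¹)^[j] x := by
    have hlt : (j - 1) < sInf {m | x < (⇑σ⁻¹)^[m+1] x} := by rw [← Kk]; omega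
    have hnm := Nat.notMem_of_lt_sInf hlt
    rw [Set.mem_setOf_eq] at hnm
    have he : j - 1 + 1 = j := by omega
    rwa [he] at hnm
  have hne := iter_ne hx1 hx2 j hj1 (by omega)
  exact lt_of_le_of_ne (le_of_not_gt hle) hne
end step
section step2
variable {σ : Equiv.Perm (Fin n)} {x : Fin n}

lemma c1_lt (hx1 : σ⁻¹ x < x) (hx2 : x < σ x) : (⇑σ⁻¹)^[Kk σ x] x < x :=
  block_lt hx1 hx2 _ (kk_pos hx1 hx2) le_rfl

lemma sigma_yy : σ (yy σ x) = (⇑σ⁻¹)^[Kk σ x] x := by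
  rw [yy, Function.iterate_succ_apply']; exact Equiv.Perm.apply_inv_self σ _

lemma yy_ne_x (hx2 : x < σ x) : yy σ x ≠ x := (lt_yy hx2).ne'
lemma cm_ne_x (hx1 : σ⁻¹ x < x) : σ⁻¹ x ≠ x := hx1.ne
lemma yy_ne_cm (hx1 : σ⁻¹ x < x) (hx2 : x < σ x) : yy σ x ≠ σ⁻¹ x :=
  (lt_trans hx1 (lt_yy hx2)).ne'

lemma low_apply_yy (hx1 : σ⁻¹ x < x) (hx2 : x < σ x) : low σ x (yy σ x) = x := by
  rw [low, Equiv.Perm.mul_apply, Equiv.Perm.mul_apply, Equiv.swap_apply_right,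
    Equiv.swap_apply_left]
  exact Equiv.Perm.apply_inv_self σ x

lemma low_apply_x (hx1 : σ⁻¹ x < x) (hx2 : x < σ x) :
    low σ x x = (⇑σ⁻¹)^[Kk σ x] x := by
  rw [low, Equiv.Perm.mul_apply, Equiv.Perm.mul_apply, Equiv.swap_apply_left,
    Equiv.swap_apply_of_ne_of_ne (yy_ne_x hx2) (yy_ne_cm hx1 hx2)]
  exact sigma_yy

lemma low_apply_cm (hx1 : σ⁻¹ x < x) (hx2 : x < σ x) : low σ x (σ⁻¹ x) = σ x := by
  rw [low, Equiv.Perm.mul_apply, Equiv.Perm.mul_apply,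
    Equiv.swap_apply_of_ne_of_ne (cm_ne_x hx1) (Ne.symm (yy_ne_cm hx1 hx2)),
    Equiv.swap_apply_right]

lemma low_apply_other (hx1 : σ⁻¹ x < x) (hx2 : x < σ x) {u : Fin n}
    (h1 : u ≠ x) (h2 : u ≠ yy σ x) (h3 : u ≠ σ⁻¹ x) : low σ x u = σ u := by
  rw [low, Equiv.Perm.mul_apply, Equiv.Perm.mul_apply,
    Equiv.swap_apply_of_ne_of_ne h1 h2, Equiv.swap_apply_of_ne_of_ne h1 h3]

lemma low_inv_x (hx1 : σ⁻¹ x < x) (hx2 : x < σ x) : (low σ x)⁻¹ x = yy σ x := by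
  rw [Equiv.Perm.inv_eq_iff_eq, low_apply_yy hx1 hx2]

lemma low_inv_z (hx1 : σ⁻¹ x < x) (hx2 : x < σ x) : (low σ x)⁻¹ (σ x) = σ⁻¹ x := by
  rw [Equiv.Perm.inv_eq_iff_eq, low_apply_cm hx1 hx2]

lemma low_inv_c1 (hx1 : σ⁻¹ x < x) (hx2 : x < σ x) :
    (low σ x)⁻¹ ((⇑σ⁻¹)^[Kk σ x] x) = x := by
  rw [Equiv.Perm.inv_eq_iff_eq, low_apply_x hx1 hx2]

lemma low_inv_other (hx1 : σ⁻¹ x < x) (hx2 : x < σ x) {u : Fin n}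
    (h1 : u ≠ x) (h2 : u ≠ σ x) (h3 : u ≠ (⇑σ⁻¹)^[Kk σ x] x) :
    (low σ x)⁻¹ u = σ⁻¹ u := by
  rw [Equiv.Perm.inv_eq_iff_eq, low_apply_other hx1 hx2, Equiv.Perm.apply_inv_self]
  · intro h; exact h2 (by rw [← h, Equiv.Perm.apply_inv_self])
  · intro h
    apply h3
    have := congrArg σ h
    rw [Equiv.Perm.apply_inv_self, sigma_yy] at this
    exact this
  · intro h; exact h1 ((Equiv.injective σ⁻¹).eq_iff.mp h ▸ rfl)
lemma E1 (hx1 : σ⁻¹ x < x) (hx2 : x < σ x) {u : Fin n} (hu : u ≠ x) :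
    u < low σ x u ↔ u < σ u := by
  by_cases h1 : u = yy σ x
  · subst h1
    rw [low_apply_yy hx1 hx2, sigma_yy]
    have h3 := lt_yy (σ := σ) hx2
    have h4 := c1_lt hx1 hx2
    constructor <;> intro h <;> [exact absurd h (asymm h3); exact absurd h (asymm (h4.trans h3))]
  · by_cases h2 : u = σ⁻¹ x
    · subst h2
      rw [low_apply_cm hx1 hx2, Equiv.Perm.apply_inv_self]
      exact ⟨fun _ => hx1, fun _ => hx1.trans hx2⟩
    · rw [low_apply_other hx1 hx2 hu h1 h2]

lemma E2 (hx1 : σ⁻¹ x < x) (hx2 : x < σ x) {u : Fin n} (hu : u ≠ x) :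
    low σ x u < u ↔ σ u < u := by
  by_cases h1 : u = yy σ x
  · subst h1
    rw [low_apply_yy hx1 hx2, sigma_yy]
    have h3 := lt_yy (σ := σ) hx2
    have h4 := c1_lt hx1 hx2
    exact ⟨fun _ => h4.trans h3, fun _ => h3⟩
  · by_cases h2 : u = σ⁻¹ x
    · subst h2
      rw [low_apply_cm hx1 hx2, Equiv.Perm.apply_inv_self]
      constructor <;> intro h <;>
        [exact absurd h (asymm (hx1.trans hx2)); exact absurd h (asymm hx1)]
    · rw [low_apply_other hx1 hx2 hu h1 h2]

lemma E3 (hx1 : σ⁻¹ x < x) (hx2 : x < σ x) {u : Fin n} (hu : u ≠ x) :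
    u < (low σ x)⁻¹ u ↔ u < σ⁻¹ u := by
  have hc1 : σ⁻¹ ((⇑σ⁻¹)^[Kk σ x] x) = yy σ x := by
    rw [yy, Function.iterate_succ_apply']
  by_cases h1 : u = σ x
  · subst h1
    rw [low_inv_z hx1 hx2, Equiv.Perm.inv_apply_self]
    constructor <;> intro h <;>
      [exact absurd h (asymm (hx1.trans hx2)); exact absurd h (asymm hx2)]
  · by_cases h2 : u = (⇑σ⁻¹)^[Kk σ x] x
    · subst h2
      rw [low_inv_c1 hx1 hx2, hc1]
      have h4 := c1_lt hx1 hx2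
      exact ⟨fun _ => h4.trans (lt_yy hx2), fun _ => h4⟩
    · rw [low_inv_other hx1 hx2 hu h1 h2]

lemma E4 (hx1 : σ⁻¹ x < x) (hx2 : x < σ x) {u : Fin n} (hu : u ≠ x) :
    (low σ x)⁻¹ u < u ↔ σ⁻¹ u < u := by
  have hc1 : σ⁻¹ ((⇑σ⁻¹)^[Kk σ x] x) = yy σ x := by
    rw [yy, Function.iterate_succ_apply']
  by_cases h1 : u = σ x
  · subst h1
    rw [low_inv_z hx1 hx2, Equiv.Perm.inv_apply_self]
    exact ⟨fun _ => hx2, fun _ => hx1.trans hx2⟩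
  · by_cases h2 : u = (⇑σ⁻¹)^[Kk σ x] x
    · subst h2
      rw [low_inv_c1 hx1 hx2, hc1]
      have h4 := c1_lt hx1 hx2
      constructor <;> intro h <;>
        [exact absurd h (asymm h4); exact absurd h (asymm (h4.trans (lt_yy hx2)))]
    · rw [low_inv_other hx1 hx2 hu h1 h2]

lemma cdaS_low (hx1 : σ⁻¹ x < x) (hx2 : x < σ x) :
    cdaS (low σ x) = (cdaS σ).erase x := by
  ext u
  simp only [cdaS, Finset.mem_filter, Finset.mem_univ, true_and, Finset.mem_erase]
  by_cases hu : u = x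
  · subst hu
    simp only [ne_eq, not_true_eq_false, false_and, iff_false, not_and]
    intro _
    rw [low_apply_x hx1 hx2]
    exact asymm (c1_lt hx1 hx2)
  · rw [E4 hx1 hx2 hu, E1 hx1 hx2 hu]
    simp [hu]

lemma cddS_low (hx1 : σ⁻¹ x < x) (hx2 : x < σ x) :
    cddS (low σ x) = insert x (cddS σ) := by
  ext u
  simp only [cddS, Finset.mem_filter, Finset.mem_univ, true_and, Finset.mem_insert]
  by_cases hu : u = x
  · subst hu
    simp only [true_or, iff_true]
    rw [low_apply_x hx1 hx2, low_inv_x hx1 hx2]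
    exact ⟨c1_lt hx1 hx2, lt_yy hx2⟩
  · rw [E2 hx1 hx2 hu, E3 hx1 hx2 hu]
    simp [hu]

lemma exc_filter_low (hx1 : σ⁻¹ x < x) (hx2 : x < σ x) :
    Finset.univ.filter (fun u => u < low σ x u) =
      (Finset.univ.filter (fun u : Fin n => u < σ u)).erase x := by
  ext u
  simp only [Finset.mem_filter, Finset.mem_univ, true_and, Finset.mem_erase]
  by_cases hu : u = x
  · subst hu
    simp only [ne_eq, not_true_eq_false, false_and, iff_false]
    rw [low_apply_x hx1 hx2]
    exact asymm (c1_lt hx1 hx2)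
  · rw [E1 hx1 hx2 hu]; simp [hu]

lemma excN_low (hx1 : σ⁻¹ x < x) (hx2 : x < σ x) : excN (low σ x) + 1 = excN σ := by
  have hx : x ∈ Finset.univ.filter (fun u : Fin n => u < σ u) := by
    simp [hx2]
  rw [excN, excN, exc_filter_low hx1 hx2, Finset.card_erase_of_mem hx]
  have := Finset.card_pos.mpr ⟨x, hx⟩
  omega

lemma low_derangement (hx1 : σ⁻¹ x < x) (hx2 : x < σ x) (hd : ∀ u, σ u ≠ u) :
    ∀ u, low σ x u ≠ u := by
  intro u
  by_cases h0 : u = x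
  · subst h0; rw [low_apply_x hx1 hx2]; exact (c1_lt hx1 hx2).ne
  by_cases h1 : u = yy σ x
  · subst h1; rw [low_apply_yy hx1 hx2]; exact (lt_yy hx2).ne
  by_cases h2 : u = σ⁻¹ x
  · subst h2; rw [low_apply_cm hx1 hx2]; exact (hx1.trans hx2).ne'
  · rw [low_apply_other hx1 hx2 h0 h1 h2]; exact hd u

lemma low_iter (hx1 : σ⁻¹ x < x) (hx2 : x < σ x) :
    ∀ j, 1 ≤ j → j ≤ Kk σ x → (⇑(low σ x))^[j] x = (⇑σ⁻¹)^[Kk σ x + 1 - j] x := by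
  intro j
  induction j with
  | zero => omega
  | succ j ih =>
    intro _ hj2
    by_cases hj0 : j = 0
    · subst hj0
      simp only [zero_add, Function.iterate_one]
      rw [low_apply_x hx1 hx2]
      congr 1
    · have hj : 1 ≤ j := by omega
      rw [Function.iterate_succ_apply', ih hj (by omega)]
      set i := Kk σ x + 1 - j with hi
      have hi2 : 2 ≤ i := by omega
      have hiK : i ≤ Kk σ x := by omega
      have hne1 : (⇑σ⁻¹)^[i] x ≠ x := iter_ne hx1 hx2 i (by omega) (by omega)
      have hne2 : (⇑σ⁻¹)^[i] x ≠ yy σ x := by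
        intro h
        have := iter_inj hx1 hx2 i (Kk σ x + 1) (by omega) le_rfl h
        omega
      have hne3 : (⇑σ⁻¹)^[i] x ≠ σ⁻¹ x := by
        intro h
        have h' : (⇑σ⁻¹)^[i] x = (⇑σ⁻¹)^[1] x := by simpa using h
        have := iter_inj hx1 hx2 i 1 (by omega) (by omega) h'
        omega
      rw [low_apply_other hx1 hx2 hne1 hne2 hne3]
      have hstep : (⇑σ⁻¹)^[i] x = σ⁻¹ ((⇑σ⁻¹)^[i-1] x) := by
        have hieq : i = (i-1) + 1 := by omega
        rw [hieq, Function.iterate_succ_apply']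
        simp only [Nat.add_sub_cancel]
      have hfin : Kk σ x + 1 - (j + 1) = i - 1 := by omega
      rw [hfin, hstep, Equiv.Perm.apply_inv_self]

lemma low_iter_top (hx1 : σ⁻¹ x < x) (hx2 : x < σ x) :
    (⇑(low σ x))^[Kk σ x + 1] x = σ x := by
  rw [Function.iterate_succ_apply', low_iter hx1 hx2 (Kk σ x) (kk_pos hx1 hx2) le_rfl]
  have : Kk σ x + 1 - Kk σ x = 1 := by omega
  rw [this]
  simp only [Function.iterate_one]
  exact low_apply_cm hx1 hx2
lemma swap_conj_perm (π : Equiv.Perm (Fin n)) (a b : Fin n) :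
    π⁻¹ * Equiv.swap a b = Equiv.swap (π⁻¹ a) (π⁻¹ b) * π⁻¹ := by
  rw [Equiv.swap_apply_apply π⁻¹ a b]
  group

lemma Kk_low_inv (hx1 : σ⁻¹ x < x) (hx2 : x < σ x) : Kk (low σ x)⁻¹ x = Kk σ x := by
  have hset : {m | x < (⇑((low σ x)⁻¹)⁻¹)^[m+1] x} = {m | x < (⇑(low σ x))^[m+1] x} := by
    rw [inv_inv]
  have hmem : Kk σ x ∈ {m | x < (⇑(low σ x))^[m+1] x} := by
    rw [Set.mem_setOf_eq, low_iter_top hx1 hx2]; exact hx2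
  have hlb : ∀ m, m < Kk σ x → ¬ x < (⇑(low σ x))^[m+1] x := by
    intro m hm
    rw [low_iter hx1 hx2 (m+1) (by omega) (by omega)]
    exact asymm (block_lt hx1 hx2 (Kk σ x + 1 - (m+1)) (by omega) (by omega))
  rw [Kk, hset]
  refine le_antisymm (Nat.sInf_le hmem) ?_
  by_contra hcon
  push_neg at hcon
  exact hlb _ hcon (Nat.sInf_mem ⟨_, hmem⟩)

lemma yy_low_inv (hx1 : σ⁻¹ x < x) (hx2 : x < σ x) : yy (low σ x)⁻¹ x = σ x := by
  rw [yy, Kk_low_inv hx1 hx2, inv_inv, low_iter_top hx1 hx2]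

lemma rai_low (hx1 : σ⁻¹ x < x) (hx2 : x < σ x) : rai (low σ x) x = σ := by
  rw [rai]
  rw [inv_eq_iff_eq_inv]
  rw [low, yy_low_inv hx1 hx2, inv_inv]
  have hc1 : (low σ x) x = (⇑σ⁻¹)^[Kk σ x] x := low_apply_x hx1 hx2
  rw [hc1]
  have hinv : (low σ x)⁻¹ = (Equiv.swap x (yy σ x) * Equiv.swap x (σ⁻¹ x)) * σ⁻¹ := by
    rw [low, mul_inv_rev, mul_inv_rev]
    simp [Equiv.swap_inv, mul_assoc]
  rw [hinv]
  have e1 : σ⁻¹ * Equiv.swap x ((⇑σ⁻¹)^[Kk σ x] x) =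
      Equiv.swap (σ⁻¹ x) (yy σ x) * σ⁻¹ := by
    rw [swap_conj_perm]
    congr 2
    rw [yy, Function.iterate_succ_apply']
  have e2 : σ⁻¹ * Equiv.swap x (σ x) = Equiv.swap (σ⁻¹ x) x * σ⁻¹ := by
    rw [swap_conj_perm]
    congr 2
    exact Equiv.Perm.inv_apply_self σ x
  calc Equiv.swap x (yy σ x) * Equiv.swap x (σ⁻¹ x) * σ⁻¹ *
        (Equiv.swap x ((⇑σ⁻¹)^[Kk σ x] x) * Equiv.swap x (σ x))
      = Equiv.swap x (yy σ x) * Equiv.swap x (σ⁻¹ x) *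
          (σ⁻¹ * Equiv.swap x ((⇑σ⁻¹)^[Kk σ x] x)) * Equiv.swap x (σ x) := by
        group
    _ = Equiv.swap x (yy σ x) * Equiv.swap x (σ⁻¹ x) *
          (Equiv.swap (σ⁻¹ x) (yy σ x) * σ⁻¹) * Equiv.swap x (σ x) := by rw [e1]
    _ = Equiv.swap x (yy σ x) * Equiv.swap x (σ⁻¹ x) * Equiv.swap (σ⁻¹ x) (yy σ x) *
          (σ⁻¹ * Equiv.swap x (σ x)) := by group
    _ = Equiv.swap x (yy σ x) * Equiv.swap x (σ⁻¹ x) * Equiv.swap (σ⁻¹ x) (yy σ x) *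
          (Equiv.swap (σ⁻¹ x) x * σ⁻¹) := by rw [e2]
    _ = σ⁻¹ := by
        have hy := lt_yy (σ := σ) hx2
        have h1 : σ⁻¹ x ≠ x := hx1.ne
        have h2 : yy σ x ≠ x := hy.ne'
        have h3 : σ⁻¹ x ≠ yy σ x := (hx1.trans hy).ne
        have hid : Equiv.swap x (yy σ x) * Equiv.swap x (σ⁻¹ x) *
            Equiv.swap (σ⁻¹ x) (yy σ x) * Equiv.swap (σ⁻¹ x) x = 1 := by
          apply Equiv.ext
          intro u
          simp only [Equiv.Perm.mul_apply, Equiv.Perm.coe_one, id_eq]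
          by_cases e1 : u = x
          · subst e1
            rw [Equiv.swap_apply_right, Equiv.swap_apply_left,
              Equiv.swap_apply_of_ne_of_ne h2 (Ne.symm h3), Equiv.swap_apply_right]
          · by_cases e2 : u = σ⁻¹ x
            · subst e2
              rw [Equiv.swap_apply_left,
                Equiv.swap_apply_of_ne_of_ne (Ne.symm h1) (Ne.symm h2),
                Equiv.swap_apply_left, Equiv.swap_apply_of_ne_of_ne h1 h3]
            · by_cases e3 : u = yy σ x
              · subst e3
                rw [Equiv.swap_apply_of_ne_of_ne (Ne.symm h3) h2, Equiv.swap_apply_right,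
                  Equiv.swap_apply_right, Equiv.swap_apply_left]
              · rw [Equiv.swap_apply_of_ne_of_ne e2 e1, Equiv.swap_apply_of_ne_of_ne e2 e3,
                  Equiv.swap_apply_of_ne_of_ne e1 e2, Equiv.swap_apply_of_ne_of_ne e1 e3]
        rw [← mul_assoc, hid, one_mul]
end step2

section transfer
variable {σ : Equiv.Perm (Fin n)} {x : Fin n}

lemma cdaS_inv (σ : Equiv.Perm (Fin n)) : cdaS σ⁻¹ = cddS σ := by
  ext u; simp [cdaS, cddS]

lemma cddS_inv (σ : Equiv.Perm (Fin n)) : cddS σ⁻¹ = cdaS σ := by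
  ext u; simp [cdaS, cddS]

lemma cdaS_rai (hd1 : σ x < x) (hd2 : x < σ⁻¹ x) :
    cdaS (rai σ x) = insert x (cdaS σ) := by
  have h1 : (σ⁻¹)⁻¹ x < x := by rwa [inv_inv]
  rw [rai, cdaS_inv, cddS_low h1 hd2, cddS_inv]

lemma cddS_rai (hd1 : σ x < x) (hd2 : x < σ⁻¹ x) :
    cddS (rai σ x) = (cddS σ).erase x := by
  have h1 : (σ⁻¹)⁻¹ x < x := by rwa [inv_inv]
  rw [rai, cddS_inv, cdaS_low h1 hd2, cdaS_inv]

lemma inv_derangement (hd : ∀ u, σ u ≠ u) : ∀ u : Fin n, σ⁻¹ u ≠ u := by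
  intro u h
  exact hd u (by conv_lhs => rw [← h, Equiv.Perm.apply_inv_self])

lemma rai_derangement (hd1 : σ x < x) (hd2 : x < σ⁻¹ x) (hd : ∀ u, σ u ≠ u) :
    ∀ u, rai σ x u ≠ u := by
  have h1 : (σ⁻¹)⁻¹ x < x := by rwa [inv_inv]
  rw [rai]
  exact inv_derangement (low_derangement h1 hd2 (inv_derangement hd))

lemma low_rai (hd1 : σ x < x) (hd2 : x < σ⁻¹ x) : low (rai σ x) x = σ := by
  have h1 : (σ⁻¹)⁻¹ x < x := by rwa [inv_inv]
  have h := rai_low (σ := σ⁻¹) h1 hd2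
  rw [rai] at h
  rw [rai]
  have := congrArg (·⁻¹) h
  simpa using this

lemma exc_inv_card (σ : Equiv.Perm (Fin n)) :
    excN σ⁻¹ = (Finset.univ.filter fun u : Fin n => σ u < u).card := by
  rw [excN]
  apply Finset.card_bij' (fun u _ => σ⁻¹ u) (fun v _ => σ v)
  · intro u hu
    simp only [Finset.mem_filter, Finset.mem_univ, true_and] at *
    rwa [Equiv.Perm.apply_inv_self]
  · intro v hv
    simp only [Finset.mem_filter, Finset.mem_univ, true_and] at *
    rwa [Equiv.Perm.inv_apply_self]
  · intro u _; exact Equiv.Perm.apply_inv_self σ u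
  · intro v _; exact Equiv.Perm.inv_apply_self σ v

lemma exc_add_exc_inv (hd : ∀ u, σ u ≠ u) : excN σ + excN σ⁻¹ = n := by
  rw [exc_inv_card, excN]
  have h := Finset.card_filter_add_card_filter_not
    (s := (Finset.univ : Finset (Fin n))) (p := fun u => u < σ u)
  have he : Finset.univ.filter (fun u : Fin n => ¬ u < σ u) =
      Finset.univ.filter (fun u : Fin n => σ u < u) := by
    apply Finset.filter_congr
    intro u _
    constructor
    · intro h'; exact lt_of_le_of_ne (le_of_not_gt h') (hd u)
    · intro h'; exact asymm h'
  rw [he] at h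
  simpa using h

lemma excN_rai (hd1 : σ x < x) (hd2 : x < σ⁻¹ x) (hd : ∀ u, σ u ≠ u) :
    excN (rai σ x) = excN σ + 1 := by
  have h1 : (σ⁻¹)⁻¹ x < x := by rwa [inv_inv]
  have hdinv := inv_derangement hd
  have e1 : excN (low σ⁻¹ x) + 1 = excN σ⁻¹ := excN_low h1 hd2
  have e2 : excN (low σ⁻¹ x) + excN (low σ⁻¹ x)⁻¹ = n :=
    exc_add_exc_inv (low_derangement h1 hd2 hdinv)
  have e3 : excN σ + excN σ⁻¹ = n := exc_add_exc_inv hd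
  rw [rai]
  omega

end transfer
lemma mem_cdaS_iff {σ : Equiv.Perm (Fin n)} {x : Fin n} :
    x ∈ cdaS σ ↔ σ⁻¹ x < x ∧ x < σ x := by simp [cdaS]

lemma mem_cddS_iff {σ : Equiv.Perm (Fin n)} {x : Fin n} :
    x ∈ cddS σ ↔ σ x < x ∧ x < σ⁻¹ x := by simp [cddS]

noncomputable def NN (σ : Equiv.Perm (Fin n)) : Equiv.Perm (Fin n) :=
  if h : (cdaS σ).Nonempty then NN (low σ ((cdaS σ).max' h)) else σ
termination_by (cdaS σ).card
decreasing_by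
  have hxm := (cdaS σ).max'_mem h
  rw [mem_cdaS_iff] at hxm
  rw [cdaS_low hxm.1 hxm.2]
  exact Finset.card_erase_lt_of_mem ((cdaS σ).max'_mem h)

noncomputable def raiseAll (τ : Equiv.Perm (Fin n)) (S : Finset (Fin n)) :
    Equiv.Perm (Fin n) :=
  if h : S.Nonempty then rai (raiseAll τ (S.erase (S.max' h))) (S.max' h) else τ
termination_by S.card
decreasing_by
  exact Finset.card_erase_lt_of_mem (S.max'_mem h)

lemma NN_spec : ∀ N (σ : Equiv.Perm (Fin n)), (cdaS σ).card = N → (∀ u, σ u ≠ u) →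
    cdaS (NN σ) = ∅ ∧ (∀ u, NN σ u ≠ u) ∧ cddS (NN σ) = cddS σ ∪ cdaS σ ∧
      excN (NN σ) + (cdaS σ).card = excN σ := by
  intro N
  induction N using Nat.strong_induction_on with
  | _ N ih =>
    intro σ hN hd
    by_cases h : (cdaS σ).Nonempty
    · set x := (cdaS σ).max' h with hx
      have hxm : x ∈ cdaS σ := (cdaS σ).max'_mem h
      have hxp := mem_cdaS_iff.mp hxm
      have hNN : NN σ = NN (low σ x) := by
        rw [NN]; rw [dif_pos h]
      have hcda : cdaS (low σ x) = (cdaS σ).erase x := cdaS_low hxp.1 hxp.2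
      have hcard : (cdaS (low σ x)).card < N := by
        rw [hcda, ← hN]
        exact Finset.card_erase_lt_of_mem hxm
      obtain ⟨r1, r2, r3, r4⟩ := ih _ hcard (low σ x) rfl (low_derangement hxp.1 hxp.2 hd)
      rw [hNN]
      refine ⟨r1, r2, ?_, ?_⟩
      · rw [r3, cddS_low hxp.1 hxp.2, hcda]
        ext u
        by_cases hu : u = x
        · subst hu; simp [hxm]
        · simp [hu]
      · rw [hcda, Finset.card_erase_of_mem hxm] at r4
        have hpos : 0 < (cdaS σ).card := Finset.card_pos.mpr ⟨x, hxm⟩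
        have := excN_low hxp.1 hxp.2
        omega
    · rw [Finset.not_nonempty_iff_eq_empty] at h
      have hNN : NN σ = σ := by rw [NN]; simp [h]
      rw [hNN, h]
      simp [hd]

lemma raiseAll_NN : ∀ N (σ : Equiv.Perm (Fin n)), (cdaS σ).card = N →
    raiseAll (NN σ) (cdaS σ) = σ := by
  intro N
  induction N using Nat.strong_induction_on with
  | _ N ih =>
    intro σ hN
    by_cases h : (cdaS σ).Nonempty
    · set x := (cdaS σ).max' h with hx
      have hxm : x ∈ cdaS σ := (cdaS σ).max'_mem h
      have hxp := mem_cdaS_iff.mp hxm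
      have hNN : NN σ = NN (low σ x) := by rw [NN]; rw [dif_pos h]
      have hcda : cdaS (low σ x) = (cdaS σ).erase x := cdaS_low hxp.1 hxp.2
      have hcard : (cdaS (low σ x)).card < N := by
        rw [hcda, ← hN]; exact Finset.card_erase_lt_of_mem hxm
      have hrec := ih _ hcard (low σ x) rfl
      rw [raiseAll]
      rw [dif_pos h, ← hx, hNN, ← hcda, hrec]
      exact rai_low hxp.1 hxp.2
    · rw [Finset.not_nonempty_iff_eq_empty] at h
      rw [h, raiseAll]
      simp only [Finset.not_nonempty_empty, dif_neg, not_false_iff]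
      rw [NN]
      simp [h]

lemma raiseAll_spec : ∀ N (S : Finset (Fin n)) (τ : Equiv.Perm (Fin n)), S.card = N →
    (∀ u, τ u ≠ u) → cdaS τ = ∅ → S ⊆ cddS τ →
    NN (raiseAll τ S) = τ ∧ cdaS (raiseAll τ S) = S ∧
      cddS (raiseAll τ S) = cddS τ \ S ∧ (∀ u, raiseAll τ S u ≠ u) ∧
      excN (raiseAll τ S) = excN τ + S.card := by
  intro N
  induction N using Nat.strong_induction_on with
  | _ N ih =>
    intro S τ hN hd hca hsub
    by_cases h : S.Nonempty
    · set x := S.max' h with hx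
      have hxm : x ∈ S := S.max'_mem h
      have hcard : (S.erase x).card < N := by rw [← hN]; exact Finset.card_erase_lt_of_mem hxm
      obtain ⟨r1, r2, r3, r4, r5⟩ := ih _ hcard (S.erase x) τ rfl hd hca
        (fun u hu => hsub (Finset.mem_of_mem_erase hu))
      set σ₀ := raiseAll τ (S.erase x) with hσ₀
      have hxcdd : x ∈ cddS σ₀ := by
        rw [r3, Finset.mem_sdiff]
        exact ⟨hsub hxm, Finset.notMem_erase x S⟩
      have hxp := mem_cddS_iff.mp hxcdd
      have hRA : raiseAll τ S = rai σ₀ x := by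
        rw [raiseAll]; rw [dif_pos h]
      rw [hRA]
      have hcdaR : cdaS (rai σ₀ x) = S := by
        rw [cdaS_rai hxp.1 hxp.2, r2, Finset.insert_erase hxm]
      refine ⟨?_, hcdaR, ?_, rai_derangement hxp.1 hxp.2 r4, ?_⟩
      · -- NN (rai σ₀ x) = τ
        have hne : (cdaS (rai σ₀ x)).Nonempty := by rw [hcdaR]; exact h
        have hmax : (cdaS (rai σ₀ x)).max' hne = x := by
          apply le_antisymm
          · apply Finset.max'_le
            intro u hu
            rw [hcdaR] at hu
            exact S.le_max' u hu
          · apply Finset.le_max'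
            rw [hcdaR]; exact hxm
        rw [NN, dif_pos hne, hmax, low_rai hxp.1 hxp.2, r1]
      · rw [cddS_rai hxp.1 hxp.2, r3]
        ext u
        simp only [Finset.mem_erase, Finset.mem_sdiff, ne_eq]
        by_cases hu : u = x
        · subst hu; simp [hxm]
        · simp only [hu]
          tauto
      · rw [excN_rai hxp.1 hxp.2 r4, r5, Finset.card_erase_of_mem hxm]
        have : 0 < S.card := Finset.card_pos.mpr ⟨x, hxm⟩
        omega
    · rw [Finset.not_nonempty_iff_eq_empty] at h
      subst h
      rw [raiseAll]
      simp only [Finset.not_nonempty_empty, dif_neg, not_false_iff]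
      have hNNτ : NN τ = τ := by rw [NN]; simp [hca]
      simp only [hNNτ, hca, Finset.card_empty, add_zero, Finset.sdiff_empty]
      refine ⟨trivial, trivial, trivial, hd, trivial⟩
lemma cdaN_card (σ : Equiv.Perm (Fin n)) : cdaN σ = (cdaS σ).card := by
  rw [cdaN]
  apply Finset.card_bij' (fun i _ => σ i) (fun u _ => σ⁻¹ u)
  · intro i hi
    simp only [Finset.mem_filter, Finset.mem_univ, true_and] at hi
    rw [mem_cdaS_iff, Equiv.Perm.inv_apply_self]
    exact hi
  · intro u hu
    rw [mem_cdaS_iff] at hu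
    simp only [Finset.mem_filter, Finset.mem_univ, true_and]
    rw [Equiv.Perm.apply_inv_self]
    exact hu
  · intro i _; exact Equiv.Perm.inv_apply_self σ i
  · intro u _; exact Equiv.Perm.apply_inv_self σ u

lemma cdd_card_eq {τ : Equiv.Perm (Fin n)} (hd : ∀ u, τ u ≠ u) (hca : cdaS τ = ∅) :
    (cddS τ).card + 2 * excN τ = n := by
  classical
  set V : Finset (Fin n) := Finset.univ.filter (fun u => u < τ u ∧ u < τ⁻¹ u) with hV
  have h1 : excN τ = V.card + (cdaS τ).card := by
    rw [excN]
    have := Finset.card_filter_add_card_filter_not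
      (s := Finset.univ.filter (fun u : Fin n => u < τ u)) (p := fun u => u < τ⁻¹ u)
    rw [Finset.filter_filter, Finset.filter_filter] at this
    have e1 : Finset.univ.filter (fun u : Fin n => u < τ u ∧ u < τ⁻¹ u) = V := rfl
    have e2 : Finset.univ.filter (fun u : Fin n => u < τ u ∧ ¬ u < τ⁻¹ u) = cdaS τ := by
      ext u
      simp only [Finset.mem_filter, Finset.mem_univ, true_and, cdaS]
      constructor
      · rintro ⟨a, b⟩
        exact ⟨lt_of_le_of_ne (le_of_not_gt b) (inv_derangement hd u), a⟩
      · rintro ⟨a, b⟩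
        exact ⟨b, asymm a⟩
    rw [e1, e2] at this
    omega
  have h2 : excN τ⁻¹ = V.card + (cddS τ).card := by
    rw [excN]
    have := Finset.card_filter_add_card_filter_not
      (s := Finset.univ.filter (fun u : Fin n => u < τ⁻¹ u)) (p := fun u => u < τ u)
    rw [Finset.filter_filter, Finset.filter_filter] at this
    have e1 : Finset.univ.filter (fun u : Fin n => u < τ⁻¹ u ∧ u < τ u) = V := by
      ext u; simp [hV, and_comm]
    have e2 : Finset.univ.filter (fun u : Fin n => u < τ⁻¹ u ∧ ¬ u < τ u) = cddS τ := by
      ext u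
      simp only [Finset.mem_filter, Finset.mem_univ, true_and, cddS]
      constructor
      · rintro ⟨a, b⟩
        exact ⟨lt_of_le_of_ne (le_of_not_gt b) (hd u), a⟩
      · rintro ⟨a, b⟩
        exact ⟨b, asymm a⟩
    rw [e1, e2] at this
    exact this.symm
  have h3 := exc_add_exc_inv hd
  rw [hca] at h1
  simp only [Finset.card_empty, add_zero] at h1
  omega

open Polynomial in
lemma powerset_sum (A : Finset (Fin n)) :
    ∑ S ∈ A.powerset, (X : Polynomial ℤ) ^ S.card = (1 + X) ^ A.card := by
  have := Finset.prod_add (fun _ : Fin n => (X : Polynomial ℤ)) (fun _ => 1) A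
  rw [Finset.prod_const, add_comm] at this
  rw [this]
  apply Finset.sum_congr rfl
  intro S _
  rw [Finset.prod_const, Finset.prod_const, one_pow, mul_one]

open Polynomial in
theorem derPoly_eq (n : ℕ) :
    derPoly n = ∑ k ∈ Finset.range (n / 2 + 1),
      ((DEset n k).card : Polynomial ℤ) * X ^ k * (1 + X) ^ (n - 2 * k) := by
  classical
  have hDer : ∀ σ : Equiv.Perm (Fin n), σ ∈ Der n ↔ ∀ u, σ u ≠ u := by
    intro σ; simp [Der]
  set T : Finset (Equiv.Perm (Fin n)) := (Der n).filter (fun τ => cdaS τ = ∅) with hT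
  have hTmem : ∀ τ, τ ∈ T ↔ ((∀ u, τ u ≠ u) ∧ cdaS τ = ∅) := by
    intro τ; rw [hT, Finset.mem_filter, hDer]
  have step1 : derPoly n =
      ∑ p ∈ T.sigma (fun τ => (cddS τ).powerset), (X : Polynomial ℤ) ^ (excN p.1 + p.2.card) := by
    rw [derPoly]
    refine Finset.sum_nbij' (fun σ => ⟨NN σ, cdaS σ⟩) (fun p => raiseAll p.1 p.2) ?_ ?_ ?_ ?_ ?_
    · intro σ hσ
      rw [hDer] at hσ
      obtain ⟨r1, r2, r3, _⟩ := NN_spec _ σ rfl hσ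
      rw [Finset.mem_sigma, hTmem]
      refine ⟨⟨r2, r1⟩, ?_⟩
      rw [Finset.mem_powerset, r3]
      exact Finset.subset_union_right
    · intro p hp
      rw [Finset.mem_sigma, hTmem, Finset.mem_powerset] at hp
      obtain ⟨⟨hd, hca⟩, hsub⟩ := hp
      obtain ⟨_, _, _, r4, _⟩ := raiseAll_spec _ p.2 p.1 rfl hd hca hsub
      rw [hDer]
      exact r4
    · intro σ hσ
      exact raiseAll_NN _ σ rfl
    · intro p hp
      rw [Finset.mem_sigma, hTmem, Finset.mem_powerset] at hp
      obtain ⟨⟨hd, hca⟩, hsub⟩ := hp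
      obtain ⟨r1, r2, _, _, _⟩ := raiseAll_spec _ p.2 p.1 rfl hd hca hsub
      exact Sigma.ext r1 (heq_of_eq r2)
    · intro σ hσ
      rw [hDer] at hσ
      obtain ⟨_, _, _, r4⟩ := NN_spec _ σ rfl hσ
      rw [← r4]
  rw [step1, Finset.sum_sigma]
  have step2 : ∀ τ ∈ T, ∑ S ∈ (cddS τ).powerset, (X : Polynomial ℤ) ^ (excN τ + S.card)
      = X ^ excN τ * (1 + X) ^ (n - 2 * excN τ) := by
    intro τ hτ
    rw [hTmem] at hτ
    have hc := cdd_card_eq hτ.1 hτ.2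
    have hcc : (cddS τ).card = n - 2 * excN τ := by omega
    rw [← hcc, ← powerset_sum, Finset.mul_sum]
    apply Finset.sum_congr rfl
    intro S _
    rw [pow_add]
  rw [Finset.sum_congr rfl step2]
  have hmaps : ∀ τ ∈ T, excN τ ∈ Finset.range (n / 2 + 1) := by
    intro τ hτ
    rw [hTmem] at hτ
    have hc := cdd_card_eq hτ.1 hτ.2
    rw [Finset.mem_range]
    have : excN τ ≤ n / 2 := Nat.le_div_iff_mul_le (by norm_num) |>.mpr (by omega)
    omega
  rw [← Finset.sum_fiberwise_of_maps_to hmaps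
    (fun τ => (X : Polynomial ℤ) ^ excN τ * (1 + X) ^ (n - 2 * excN τ))]
  apply Finset.sum_congr rfl
  intro k hk
  have hfib : T.filter (fun τ => excN τ = k) = DEset n k := by
    rw [hT, DEset, Finset.filter_filter]
    apply Finset.filter_congr
    intro τ _
    rw [cdaN_card, Finset.card_eq_zero]
    tauto
  calc ∑ τ ∈ T.filter (fun τ => excN τ = k),
        (X : Polynomial ℤ) ^ excN τ * (1 + X) ^ (n - 2 * excN τ)
      = ∑ _τ ∈ T.filter (fun τ => excN τ = k),
        (X : Polynomial ℤ) ^ k * (1 + X) ^ (n - 2 * k) := by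
        apply Finset.sum_congr rfl
        intro τ hτ
        rw [Finset.mem_filter] at hτ
        rw [hτ.2]
    _ = ((DEset n k).card : Polynomial ℤ) * X ^ k * (1 + X) ^ (n - 2 * k) := by
        rw [Finset.sum_const, hfib, nsmul_eq_mul, mul_assoc]
lemma mem_Der {σ : Equiv.Perm (Fin n)} : σ ∈ Der n ↔ ∀ u, σ u ≠ u := by simp [Der]

open Polynomial in
lemma coeff_derPoly (n j : ℕ) :
    (derPoly n).coeff j = (((Der n).filter (fun σ => excN σ = j)).card : ℤ) := by
  classical
  rw [derPoly, finset_sum_coeff]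
  have : ∀ σ ∈ Der n, ((X : Polynomial ℤ) ^ excN σ).coeff j
      = if excN σ = j then 1 else 0 := by
    intro σ _
    rw [coeff_X_pow]
    simp [eq_comm]
  rw [Finset.sum_congr rfl this, Finset.sum_boole]

lemma derPoly_sym (n : ℕ) : ∀ j ≤ n, (derPoly n).coeff j = (derPoly n).coeff (n - j) := by
  intro j hj
  rw [coeff_derPoly, coeff_derPoly]
  congr 1
  refine Finset.card_bij' (fun σ _ => σ⁻¹) (fun σ _ => σ⁻¹) ?_ ?_
    (fun σ _ => inv_inv σ) (fun σ _ => inv_inv σ)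
  · intro σ hσ
    rw [Finset.mem_filter, mem_Der] at hσ
    have h2 := exc_add_exc_inv hσ.1
    have h3 := hσ.2
    show σ⁻¹ ∈ Finset.filter _ (Der n)
    rw [Finset.mem_filter, mem_Der]
    exact ⟨inv_derangement hσ.1, by omega⟩
  · intro σ hσ
    rw [Finset.mem_filter, mem_Der] at hσ
    have h2 := exc_add_exc_inv hσ.1
    have h3 := hσ.2
    show σ⁻¹ ∈ Finset.filter _ (Der n)
    rw [Finset.mem_filter, mem_Der]
    exact ⟨inv_derangement hσ.1, by omega⟩

lemma choose_mono_half {m a b : ℕ} (hab : a ≤ b) (h2 : 2 * b ≤ m) :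
    m.choose a ≤ m.choose b := by
  induction b, hab using Nat.le_induction with
  | base => exact le_rfl
  | succ b hb ih =>
    refine le_trans (ih (by omega)) (Nat.choose_le_succ_of_lt_half_left ?_)
    have : b + 1 ≤ m / 2 := (Nat.le_div_iff_mul_le (by norm_num)).mpr (by omega)
    omega

open Polynomial in
lemma coeff_term (c k m j : ℕ) :
    (((c : Polynomial ℤ)) * X ^ k * (1 + X) ^ m).coeff j
      = (c : ℤ) * (if k ≤ j then ((m.choose (j - k) : ℤ)) else 0) := by
  have hc : ((c : Polynomial ℤ)) = C (c : ℤ) := by simp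
  rw [hc, mul_assoc, coeff_C_mul]
  congr 1
  rw [mul_comm, coeff_mul_X_pow']
  by_cases h : k ≤ j
  · rw [if_pos h, if_pos h, coeff_one_add_X_pow]
  · rw [if_neg h, if_neg h]

open Polynomial in
lemma derPoly_unimodal (n : ℕ) :
    ∀ j k, j ≤ k → k ≤ n / 2 → (derPoly n).coeff j ≤ (derPoly n).coeff k := by
  intro j k hjk hk
  rw [derPoly_eq n, finset_sum_coeff, finset_sum_coeff]
  apply Finset.sum_le_sum
  intro k' _
  rw [coeff_term, coeff_term]
  apply mul_le_mul_of_nonneg_left _ (Int.natCast_nonneg _)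
  by_cases h1 : k' ≤ j
  · rw [if_pos h1, if_pos (le_trans h1 hjk)]
    have h2k : 2 * k ≤ n := by
      have := Nat.div_mul_le_self n 2
      omega
    exact_mod_cast choose_mono_half (by omega) (by omega)
  · rw [if_neg h1]
    by_cases h2 : k' ≤ k
    · rw [if_pos h2]
      positivity
    · rw [if_neg h2]

theorem stmt4 (n : ℕ) (hn : 1 ≤ n) :
    derPoly n =
      (∑ k ∈ Finset.range (n / 2 + 1),
        ((DEset n k).card : Polynomial ℤ) * Polynomial.X ^ k *
          (1 + Polynomial.X) ^ (n - 2 * k)) ∧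
    (∀ j ≤ n, (derPoly n).coeff j = (derPoly n).coeff (n - j)) ∧
    (∀ j k, j ≤ k → k ≤ n / 2 → (derPoly n).coeff j ≤ (derPoly n).coeff k) :=
  ⟨derPoly_eq n, derPoly_sym n, derPoly_unimodal n⟩
end

section
/- For all 0 ≤ k ≤ n, ĝ_{n,k} = Σ_{i=0}^{k} γ_{n,i}^{(2)} · 2^{k-i} · C(n-i, k-i), where ĝ_{n,k} counts drop-colored permutations of [n] without double excedance whose total number of weak excedances and colored drops is k, γ_{n,i}^{(2)} counts permutations of [n] with i weak excedances and no double excedance, and C denotes binomial coefficients. -/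
open Finset

lemma fin3_mem (x : Fin 3) : (x ∈ ({1,2} : Finset (Fin 3)) ↔ (x:ℕ) ≠ 0)
    ∧ (x ∈ ({0} : Finset (Fin 3)) ↔ (x:ℕ) = 0) := by fin_cases x <;> simp

lemma pi_card {n : ℕ} (S : Finset (Fin n)) :
    (Fintype.piFinset (fun i => if i ∈ S then ({1,2} : Finset (Fin 3)) else {0})).card
      = 2 ^ S.card := by
  rw [Fintype.card_piFinset]
  have : ∀ i : Fin n, (if i ∈ S then ({1,2} : Finset (Fin 3)) else {0}).card
      = if i ∈ S then 2 else 1 := by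
    intro i; split <;> decide
  simp_rw [this]
  rw [Finset.prod_ite_mem, Finset.univ_inter, Finset.prod_const]

lemma colcount {n : ℕ} (D : Finset (Fin n)) (m : ℕ) :
    (Finset.univ.filter fun c : Fin n → Fin 3 =>
        (∀ i, (c i : ℕ) ≠ 0 → i ∈ D) ∧
        (Finset.univ.filter fun i => (c i : ℕ) ≠ 0).card = m).card
      = D.card.choose m * 2 ^ m := by
  rw [Finset.card_eq_sum_card_fiberwise
        (f := fun c => Finset.univ.filter fun i => (c i : ℕ) ≠ 0)
        (t := D.powersetCard m) ?_]
  · have key : ∀ S ∈ D.powersetCard m,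
        (((Finset.univ.filter fun c : Fin n → Fin 3 =>
            (∀ i, (c i : ℕ) ≠ 0 → i ∈ D) ∧
            (Finset.univ.filter fun i => (c i : ℕ) ≠ 0).card = m)).filter
          fun c => (Finset.univ.filter fun i => (c i : ℕ) ≠ 0) = S).card = 2 ^ m := by
      intro S hS
      rw [Finset.mem_powersetCard] at hS
      have heq : ((Finset.univ.filter fun c : Fin n → Fin 3 =>
            (∀ i, (c i : ℕ) ≠ 0 → i ∈ D) ∧
            (Finset.univ.filter fun i => (c i : ℕ) ≠ 0).card = m)).filter
          (fun c => (Finset.univ.filter fun i => (c i : ℕ) ≠ 0) = S)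
          = Fintype.piFinset (fun i => if i ∈ S then ({1,2} : Finset (Fin 3)) else {0}) := by
        ext c
        simp only [Finset.mem_filter, Finset.mem_univ, true_and, Fintype.mem_piFinset]
        have hmem : ∀ i : Fin n,
            (c i ∈ (if i ∈ S then ({1,2} : Finset (Fin 3)) else {0}))
              ↔ ((c i : ℕ) ≠ 0 ↔ i ∈ S) := by
          intro i
          by_cases hi : i ∈ S <;>
            simp [hi, (fin3_mem (c i)).1, (fin3_mem (c i)).2] <;> tauto
        simp_rw [hmem]
        constructor
        · rintro ⟨-, hsupp⟩ i
          rw [← hsupp]; simp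
        · intro h
          have hfilt : (Finset.univ.filter fun i => (c i : ℕ) ≠ 0) = S := by
            ext i; simpa using h i
          exact ⟨⟨fun i hi => hS.1 ((h i).mp hi), by rw [hfilt, hS.2]⟩, hfilt⟩
      rw [heq, pi_card, hS.2]
    rw [Finset.sum_congr rfl key, Finset.sum_const, Finset.card_powersetCard, smul_eq_mul]
  · intro c hc
    simp only [Finset.mem_coe, Finset.mem_filter, Finset.mem_univ, true_and] at hc ⊢
    rw [Finset.mem_powersetCard]
    exact ⟨fun i hi => hc.1 i (by simpa using (Finset.mem_filter.mp hi).2), hc.2⟩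

lemma wex_add_drop {n : ℕ} (σ : Equiv.Perm (Fin n)) : wexN σ + dropN σ = n := by
  have := Finset.card_filter_add_card_filter_not
    (s := (Finset.univ : Finset (Fin n))) (p := fun i : Fin n => i ≤ σ i)
  simp only [not_le, Finset.card_univ, Fintype.card_fin] at this
  simpa [wexN, dropN] using this

lemma fiber_card {n k : ℕ} (τ : Equiv.Perm (Fin n)) (hτ : cdaN τ = 0) :
    (((DCset n).filter fun σ => wexN σ.1 + cdropN σ = k).filter
        fun σ => σ.1 = τ).card
      = if wexN τ ≤ k then (n - wexN τ).choose (k - wexN τ) * 2 ^ (k - wexN τ)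
        else 0 := by
  by_cases hw : wexN τ ≤ k
  · rw [if_pos hw]
    have hD : (Finset.univ.filter fun i : Fin n => τ i < i).card = n - wexN τ := by
      have := wex_add_drop τ
      simp only [dropN] at this
      omega
    rw [← hD, ← colcount]
    apply Finset.card_nbij' (i := fun σ => σ.2) (j := fun c => (τ, c))
    · intro σ hσ
      simp only [Finset.mem_coe, Finset.mem_filter] at hσ ⊢
      simp only [DCset, cdropN, Finset.mem_filter, Finset.mem_univ, true_and] at hσ ⊢
      obtain ⟨⟨⟨-, hdrop⟩, hsum⟩, hfst⟩ := hσ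
      subst hfst
      exact ⟨fun i hi => by simpa using hdrop i hi, by omega⟩
    · intro c hc
      simp only [Finset.mem_coe, Finset.mem_filter] at hc ⊢
      simp only [DCset, cdropN, Finset.mem_filter, Finset.mem_univ, true_and] at hc ⊢
      exact ⟨⟨⟨hτ, fun i hi => by simpa using hc.1 i hi⟩, by omega⟩, trivial⟩
    · intro σ hσ
      simp only [Finset.mem_coe, Finset.mem_filter] at hσ
      exact Prod.ext hσ.2.symm rfl
    · intro c _; rfl
  · rw [if_neg hw]
    rw [Finset.card_eq_zero, Finset.filter_eq_empty_iff]
    intro σ hσ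
    simp only [Finset.mem_filter] at hσ
    intro hfst
    have := hσ.2
    rw [hfst] at this
    omega

theorem stmt14 (n k : ℕ) (hk : k ≤ n) :
    ghat n k = ∑ i ∈ Finset.range (k + 1),
      gam2 n i * 2 ^ (k - i) * (n - i).choose (k - i) := by
  classical
  rw [ghat]
  rw [Finset.card_eq_sum_card_fiberwise (f := Prod.fst)
        (t := Finset.univ.filter fun τ : Equiv.Perm (Fin n) => cdaN τ = 0) ?_]
  · have step : ∀ τ ∈ (Finset.univ.filter fun τ : Equiv.Perm (Fin n) => cdaN τ = 0),
        (((DCset n).filter fun σ => wexN σ.1 + cdropN σ = k).filter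
            fun σ => σ.1 = τ).card
          = ∑ i ∈ Finset.range (k + 1),
              if wexN τ = i then (n - i).choose (k - i) * 2 ^ (k - i) else 0 := by
      intro τ hτ
      simp only [Finset.mem_filter, Finset.mem_univ, true_and] at hτ
      rw [fiber_card τ hτ]
      by_cases hw : wexN τ ≤ k
      · rw [if_pos hw, Finset.sum_ite_eq (Finset.range (k+1)) (wexN τ)]
        rw [if_pos (Finset.mem_range.mpr (by omega))]
      · rw [if_neg hw]
        rw [Finset.sum_eq_zero]
        intro i hi
        rw [if_neg]
        simp only [Finset.mem_range] at hi
        omega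
    rw [Finset.sum_congr rfl step, Finset.sum_comm]
    apply Finset.sum_congr rfl
    intro i _
    rw [← Finset.sum_filter]
    rw [Finset.sum_const, Finset.filter_filter]
    have : (Finset.univ.filter fun τ : Equiv.Perm (Fin n) => cdaN τ = 0 ∧ wexN τ = i).card
        = gam2 n i := by
      rw [gam2]
      congr 1
      apply Finset.filter_congr
      intro τ _
      tauto
    simp only [smul_eq_mul]
    rw [this]
    ring
  · intro σ hσ
    simp only [DCset, Finset.mem_coe, Finset.mem_filter, Finset.mem_univ, true_and] at hσ ⊢
    exact hσ.1.1
end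

section
/- For every permutation σ ∈ S_n, inv σ = drop σ + cros σ + 2·nest σ, where drop σ = #{i : σ(i) < i}, cros σ = #{(i,j) : (i < j ≤ σ(i) < σ(j)) or (i > j > σ(i) > σ(j))}, and nest σ = #{(i,j) : (i < j ≤ σ(j) < σ(i)) or (i > j > σ(j) > σ(i))}. -/
open Finset

/-- Auxiliary count: `#{a : a < t ≤ σ a}`. -/
private def dC17 {n : ℕ} (σ : Equiv.Perm (Fin n)) (t : ℕ) : ℕ :=
  ∑ a : Fin n, if (a : ℕ) < t ∧ t ≤ (σ a : ℕ) then 1 else 0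

/-- Auxiliary count: `#{b : σ b < t ≤ b}`. -/
private def eC17 {n : ℕ} (σ : Equiv.Perm (Fin n)) (t : ℕ) : ℕ :=
  ∑ b : Fin n, if (σ b : ℕ) < t ∧ t ≤ (b : ℕ) then 1 else 0

private lemma dC17_eq_eC17 {n : ℕ} (σ : Equiv.Perm (Fin n)) (t : ℕ) :
    dC17 σ t = eC17 σ t := by
  have hA : dC17 σ t + (∑ a : Fin n, if (a : ℕ) < t ∧ (σ a : ℕ) < t then 1 else 0)
      = ∑ a : Fin n, if (a : ℕ) < t then 1 else 0 := by
    rw [dC17, ← Finset.sum_add_distrib]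
    exact Finset.sum_congr rfl fun a _ => by split_ifs <;> omega
  have hB : eC17 σ t + (∑ a : Fin n, if (a : ℕ) < t ∧ (σ a : ℕ) < t then 1 else 0)
      = ∑ a : Fin n, if (σ a : ℕ) < t then 1 else 0 := by
    rw [eC17, ← Finset.sum_add_distrib]
    exact Finset.sum_congr rfl fun a _ => by split_ifs <;> omega
  have hC : (∑ a : Fin n, if (σ a : ℕ) < t then 1 else 0)
      = ∑ a : Fin n, if (a : ℕ) < t then 1 else 0 :=
    Equiv.sum_comp σ (fun a : Fin n => if (a : ℕ) < t then 1 else 0)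
  omega

set_option maxRecDepth 20000 in
theorem stmt17 (n : ℕ) (σ : Equiv.Perm (Fin n)) :
    invN σ = dropN σ + crosN σ + 2 * nestN σ := by
  classical
  have hvne : ∀ {a b : Fin n}, a ≠ b → ((σ a : ℕ) ≠ (σ b : ℕ)) := fun {a b} hab h =>
    (σ.injective.ne hab) (Fin.val_injective h)
  have hfne : ∀ {a b : Fin n}, a ≠ b → ((a : ℕ) ≠ (b : ℕ)) := fun {a b} hab h =>
    hab (Fin.val_injective h)
  set SINV := ∑ a : Fin n, ∑ b : Fin n,
      if (a : ℕ) < (b : ℕ) ∧ (σ b : ℕ) < (σ a : ℕ) then 1 else 0 with hSINV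
  set SNU := ∑ a : Fin n, ∑ b : Fin n,
      if (a : ℕ) < (b : ℕ) ∧ (b : ℕ) ≤ (σ b : ℕ) ∧ (σ b : ℕ) < (σ a : ℕ) then 1 else 0 with hSNU
  set SND := ∑ a : Fin n, ∑ b : Fin n,
      if (a : ℕ) < (b : ℕ) ∧ (σ a : ℕ) < (a : ℕ) ∧ (σ b : ℕ) < (σ a : ℕ) then 1 else 0 with hSND
  set SCU := ∑ a : Fin n, ∑ b : Fin n,
      if (a : ℕ) < (b : ℕ) ∧ (b : ℕ) ≤ (σ a : ℕ) ∧ (σ a : ℕ) < (σ b : ℕ) then 1 else 0 with hSCU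
  set SCD := ∑ a : Fin n, ∑ b : Fin n,
      if (a : ℕ) < (b : ℕ) ∧ (σ b : ℕ) < (a : ℕ) ∧ (σ a : ℕ) < (σ b : ℕ) then 1 else 0 with hSCD
  set SX := ∑ a : Fin n, ∑ b : Fin n,
      if (a : ℕ) ≤ (σ a : ℕ) ∧ (σ b : ℕ) < (b : ℕ) ∧ (a : ℕ) < (b : ℕ) ∧ (σ b : ℕ) < (σ a : ℕ)
      then 1 else 0 with hSX
  set SX1 := ∑ a : Fin n, ∑ b : Fin n,
      if (a : ℕ) ≤ (σ a : ℕ) ∧ (σ b : ℕ) < (a : ℕ) ∧ (a : ℕ) ≤ (b : ℕ) then 1 else 0 with hSX1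
  set SX2 := ∑ b : Fin n,
      if (σ b : ℕ) < (b : ℕ) ∧ (σ b : ℕ) < (σ (σ b) : ℕ) then 1 else 0 with hSX2
  set SX3 := ∑ b : Fin n, ∑ a : Fin n,
      if (σ b : ℕ) < (b : ℕ) ∧ (a : ℕ) < (σ b : ℕ) ∧ (σ b : ℕ) < (σ a : ℕ) then 1 else 0 with hSX3
  set SE := ∑ b : Fin n,
      if (σ b : ℕ) < (b : ℕ) ∧ (σ (σ b) : ℕ) < (σ b : ℕ) then 1 else 0 with hSE
  set SDrop := ∑ b : Fin n, if (σ b : ℕ) < (b : ℕ) then 1 else 0 with hSDrop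
  -- conversions of the definitions to indicator sums
  have h0a : invN σ = SINV := by
    rw [hSINV, invN, Finset.card_filter, Fintype.sum_prod_type]
    exact Finset.sum_congr rfl fun a _ => Finset.sum_congr rfl fun b _ => by
      simp only [Fin.lt_def]
  have h0b : dropN σ = SDrop := by
    rw [hSDrop, dropN, Finset.card_filter]
    exact Finset.sum_congr rfl fun b _ => by simp only [Fin.lt_def]
  have h0c : nestN σ = SNU + SND := by
    have t2 : (∑ a : Fin n, ∑ b : Fin n,
        if (b : ℕ) < (a : ℕ) ∧ (σ b : ℕ) < (b : ℕ) ∧ (σ a : ℕ) < (σ b : ℕ) then 1 else 0)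
        = SND := by
      rw [hSND]; exact Finset.sum_comm
    rw [nestN, Finset.card_filter, Fintype.sum_prod_type, hSNU, ← t2]
    simp only [← Finset.sum_add_distrib]
    refine Finset.sum_congr rfl fun a _ => Finset.sum_congr rfl fun b _ => ?_
    simp only [Fin.lt_def, Fin.le_def]
    split_ifs <;> omega
  have h0d : crosN σ = SCU + SCD := by
    have t2 : (∑ a : Fin n, ∑ b : Fin n,
        if (b : ℕ) < (a : ℕ) ∧ (σ a : ℕ) < (b : ℕ) ∧ (σ b : ℕ) < (σ a : ℕ) then 1 else 0)
        = SCD := by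
      rw [hSCD]; exact Finset.sum_comm
    rw [crosN, Finset.card_filter, Fintype.sum_prod_type, hSCU, ← t2]
    simp only [← Finset.sum_add_distrib]
    refine Finset.sum_congr rfl fun a _ => Finset.sum_congr rfl fun b _ => ?_
    simp only [Fin.lt_def, Fin.le_def]
    split_ifs <;> omega
  -- inversions split into the two nesting types and the mixed type SX
  have e1 : SINV = SNU + SND + SX := by
    rw [hSINV]
    calc (∑ a : Fin n, ∑ b : Fin n,
          if (a : ℕ) < (b : ℕ) ∧ (σ b : ℕ) < (σ a : ℕ) then 1 else 0)
        = ∑ a : Fin n, ∑ b : Fin n,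
          ((if (a : ℕ) < (b : ℕ) ∧ (b : ℕ) ≤ (σ b : ℕ) ∧ (σ b : ℕ) < (σ a : ℕ) then 1 else 0)
          + (if (a : ℕ) < (b : ℕ) ∧ (σ a : ℕ) < (a : ℕ) ∧ (σ b : ℕ) < (σ a : ℕ) then 1 else 0)
          + (if (a : ℕ) ≤ (σ a : ℕ) ∧ (σ b : ℕ) < (b : ℕ) ∧ (a : ℕ) < (b : ℕ) ∧
                (σ b : ℕ) < (σ a : ℕ) then 1 else 0)) := by
          refine Finset.sum_congr rfl fun a _ => Finset.sum_congr rfl fun b _ => ?_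
          split_ifs <;> omega
      _ = SNU + SND + SX := by
          simp only [Finset.sum_add_distrib]
          all_goals rfl
  -- the mixed type splits into three pieces
  have e2 : SX = SX1 + SX2 + SX3 := by
    rw [hSX]
    calc (∑ a : Fin n, ∑ b : Fin n,
          if (a : ℕ) ≤ (σ a : ℕ) ∧ (σ b : ℕ) < (b : ℕ) ∧ (a : ℕ) < (b : ℕ) ∧
            (σ b : ℕ) < (σ a : ℕ) then 1 else 0)
        = ∑ a : Fin n, ∑ b : Fin n,
          ((if (a : ℕ) ≤ (σ a : ℕ) ∧ (σ b : ℕ) < (a : ℕ) ∧ (a : ℕ) ≤ (b : ℕ) then 1 else 0)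
          + (if a = σ b then
              (if (σ b : ℕ) < (b : ℕ) ∧ (σ b : ℕ) < (σ (σ b) : ℕ) then 1 else 0) else 0)
          + (if (σ b : ℕ) < (b : ℕ) ∧ (a : ℕ) < (σ b : ℕ) ∧ (σ b : ℕ) < (σ a : ℕ)
              then 1 else 0)) := by
          refine Finset.sum_congr rfl fun a _ => Finset.sum_congr rfl fun b _ => ?_
          rcases eq_or_ne a (σ b) with rfl | hasb
          · rw [if_pos rfl]
            split_ifs <;> omega
          · rw [if_neg hasb]
            rcases eq_or_ne a b with rfl | hab
            · split_ifs <;> omega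
            · have h1 := hfne hab
              have h3 := hfne hasb
              split_ifs <;> omega
      _ = SX1 + SX2 + SX3 := by
          simp only [Finset.sum_add_distrib]
          have hA : (∑ a : Fin n, ∑ b : Fin n,
              if (a : ℕ) ≤ (σ a : ℕ) ∧ (σ b : ℕ) < (a : ℕ) ∧ (a : ℕ) ≤ (b : ℕ)
              then 1 else 0) = SX1 := rfl
          have hB : (∑ a : Fin n, ∑ b : Fin n, if a = σ b then
              (if (σ b : ℕ) < (b : ℕ) ∧ (σ b : ℕ) < (σ (σ b) : ℕ) then 1 else 0) else 0)
              = SX2 :=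
            (Finset.sum_comm).trans (Finset.sum_congr rfl fun b _ => by simp)
          have hC : (∑ a : Fin n, ∑ b : Fin n,
              if (σ b : ℕ) < (b : ℕ) ∧ (a : ℕ) < (σ b : ℕ) ∧ (σ b : ℕ) < (σ a : ℕ)
              then 1 else 0) = SX3 := Finset.sum_comm
          omega
  -- SX1 counts the same as upper nestings plus upper crossings
  have e3 : SX1 = SNU + SCU := by
    have w : SNU + SCU = ∑ a : Fin n, ∑ b : Fin n,
        (if (a : ℕ) ≤ (σ a : ℕ) ∧ (b : ℕ) < (a : ℕ) ∧ (a : ℕ) ≤ (σ b : ℕ)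
          then 1 else 0) := by
      have w1 : SNU + SCU = ∑ a : Fin n, ∑ b : Fin n,
          (if (b : ℕ) ≤ (σ b : ℕ) ∧ (a : ℕ) < (b : ℕ) ∧ (b : ℕ) ≤ (σ a : ℕ)
            then 1 else 0) := by
        rw [hSNU, hSCU]
        simp only [← Finset.sum_add_distrib]
        refine Finset.sum_congr rfl fun a _ => Finset.sum_congr rfl fun b _ => ?_
        rcases eq_or_ne a b with rfl | hab
        · split_ifs <;> omega
        · have h1 := hfne hab
          have h2 := hvne hab
          split_ifs <;> omega
      rw [w1]; exact Finset.sum_comm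
    rw [w, hSX1]
    refine Finset.sum_congr rfl fun a _ => ?_
    by_cases h : (a : ℕ) ≤ (σ a : ℕ)
    · simp only [h, true_and]
      exact (dC17_eq_eC17 σ (a : ℕ)).symm
    · simp [h]
  -- SX3 counts the same as lower nestings plus lower crossings plus SE
  have e4 : SX3 = SND + SCD + SE := by
    have s1 : SX3 = ∑ x : Fin n, ∑ y : Fin n,
        (if (σ x : ℕ) < (x : ℕ) ∧ (σ y : ℕ) < (σ x : ℕ) ∧ (σ x : ℕ) ≤ (y : ℕ)
          then 1 else 0) := by
      rw [hSX3]
      refine Finset.sum_congr rfl fun b _ => ?_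
      by_cases hb : (σ b : ℕ) < (b : ℕ)
      · simp only [hb, true_and]
        have hd : (∑ a : Fin n,
            if (a : ℕ) < (σ b : ℕ) ∧ (σ b : ℕ) < (σ a : ℕ) then 1 else 0)
            = dC17 σ ((σ b : ℕ)) := by
          rw [dC17]
          refine Finset.sum_congr rfl fun a _ => ?_
          rcases eq_or_ne a b with rfl | hab
          · split_ifs <;> omega
          · have h2 := hvne hab
            split_ifs <;> omega
        rw [hd, dC17_eq_eC17, eC17]
      · simp [hb]
    rw [s1]
    calc (∑ x : Fin n, ∑ y : Fin n,
          if (σ x : ℕ) < (x : ℕ) ∧ (σ y : ℕ) < (σ x : ℕ) ∧ (σ x : ℕ) ≤ (y : ℕ)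
            then 1 else 0)
        = ∑ x : Fin n, ∑ y : Fin n,
          ((if (x : ℕ) < (y : ℕ) ∧ (σ x : ℕ) < (x : ℕ) ∧ (σ y : ℕ) < (σ x : ℕ) then 1 else 0)
          + (if (y : ℕ) < (x : ℕ) ∧ (σ x : ℕ) < (y : ℕ) ∧ (σ y : ℕ) < (σ x : ℕ) then 1 else 0)
          + (if y = σ x then
              (if (σ x : ℕ) < (x : ℕ) ∧ (σ (σ x) : ℕ) < (σ x : ℕ) then 1 else 0) else 0)) := by
          refine Finset.sum_congr rfl fun x _ => Finset.sum_congr rfl fun y _ => ?_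
          rcases eq_or_ne y (σ x) with rfl | hy
          · rw [if_pos rfl]
            split_ifs <;> omega
          · rw [if_neg hy]
            rcases eq_or_ne x y with rfl | hxy
            · split_ifs <;> omega
            · have h1 := hfne hxy
              have h2 := hvne hxy
              have h3 : (σ x : ℕ) ≠ (y : ℕ) := fun hh => hy (Fin.val_injective hh).symm
              split_ifs <;> omega
      _ = SND + SCD + SE := by
          simp only [Finset.sum_add_distrib]
          have hA : (∑ x : Fin n, ∑ y : Fin n,
              if (x : ℕ) < (y : ℕ) ∧ (σ x : ℕ) < (x : ℕ) ∧ (σ y : ℕ) < (σ x : ℕ)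
              then 1 else 0) = SND := rfl
          have hB : (∑ x : Fin n, ∑ y : Fin n,
              if (y : ℕ) < (x : ℕ) ∧ (σ x : ℕ) < (y : ℕ) ∧ (σ y : ℕ) < (σ x : ℕ)
              then 1 else 0) = SCD := Finset.sum_comm
          have hC : (∑ x : Fin n, ∑ y : Fin n, if y = σ x then
              (if (σ x : ℕ) < (x : ℕ) ∧ (σ (σ x) : ℕ) < (σ x : ℕ) then 1 else 0) else 0)
              = SE := Finset.sum_congr rfl fun x _ => by simp
          omega
  -- SX2 + SE = SDrop
  have e5 : SX2 + SE = SDrop := by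
    rw [hSX2, hSE, hSDrop, ← Finset.sum_add_distrib]
    refine Finset.sum_congr rfl fun b _ => ?_
    rcases eq_or_ne (σ b) b with h | h
    · simp only [h]
      split_ifs <;> omega
    · have h2 : (σ (σ b) : ℕ) ≠ (σ b : ℕ) := fun hh =>
        (σ.injective.ne h) (Fin.val_injective hh)
      split_ifs <;> omega
  rw [h0a, h0b, h0c, h0d]
  omega
end
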